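/- arXiv:1710.04472 — 8 statements merged into one kernel-verified Lean document; each statement's English description precedes it below -/
import Mathlib

section
/- Let p be a prime and R a commutative ℚ-algebra. Let X(t) = Σ_{n≥0} x_n t^n and C(t) = Σ_{n≥1} (c_n/n) t^n be formal power series in R[[t]] with X = exp(C). Let U be the p-singular part of X, V the p-regular part of X, and Y(t) = V(t)·U(t)^{-1} = Σ_{n≥0} y_n t^n. Then for every n ≥ 1, the coefficient y_n belongs to the ℚ-subalgebra of R generated by the set {c_i : i ≥ 1, p ∤ i}. -/
open PowerSeries

/-- The `p`-singular part of a power series `F = Σ fₙ tⁿ`, namely `Σ_{p ∣ n} fₙ tⁿ`. -/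
noncomputable def pSingularPart {R : Type*} [CommRing R] (p : ℕ) (F : PowerSeries R) :
    PowerSeries R :=
  PowerSeries.mk fun n => if p ∣ n then PowerSeries.coeff n F else 0

/-- The `p`-regular part of a power series `F = Σ fₙ tⁿ`, namely `Σ_{p ∤ n} fₙ tⁿ`. -/
noncomputable def pRegularPart {R : Type*} [CommRing R] (p : ℕ) (F : PowerSeries R) :
    PowerSeries R :=
  PowerSeries.mk fun n => if p ∣ n then 0 else PowerSeries.coeff n F

/-- `exp C = Σ_{k≥0} Cᵏ/k!` for a power series `C` with zero constant term over a
commutative `ℚ`-algebra.  (When the constant term of `C` is zero, `coeff n (C ^ k) = 0`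
for `k > n`, so the truncated sum below computes the full exponential.) -/
noncomputable def psExp {R : Type*} [CommRing R] [Algebra ℚ R] (C : PowerSeries R) :
    PowerSeries R :=
  PowerSeries.mk fun n => ∑ k ∈ Finset.range (n + 1),
    ((k.factorial : ℚ)⁻¹) • PowerSeries.coeff n (C ^ k)

section Aux

variable {R : Type*} [CommRing R]


theorem coeff_pSing' (p n : ℕ) (F : PowerSeries R) :
    PowerSeries.coeff n (pSingularPart p F) =
      if p ∣ n then PowerSeries.coeff n F else 0 := by
  rw [pSingularPart, PowerSeries.coeff_mk]

theorem coeff_pReg' (p n : ℕ) (F : PowerSeries R) :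
    PowerSeries.coeff n (pRegularPart p F) =
      if p ∣ n then 0 else PowerSeries.coeff n F := by
  rw [pRegularPart, PowerSeries.coeff_mk]

theorem coeff_pow_eq_zero' {C : PowerSeries R} (hC : PowerSeries.constantCoeff C = 0)
    {n k : ℕ} (h : n < k) : PowerSeries.coeff n (C ^ k) = 0 := by
  have : (PowerSeries.X : PowerSeries R) ^ k ∣ C ^ k :=
    pow_dvd_pow_of_dvd (PowerSeries.X_dvd_iff.mpr hC) k
  exact (PowerSeries.X_pow_dvd_iff.mp this) n h

theorem pReg_add_pSing (p : ℕ) (F : PowerSeries R) :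
    pRegularPart p F + pSingularPart p F = F := by
  ext n
  simp only [map_add, pRegularPart, pSingularPart, PowerSeries.coeff_mk]
  split_ifs <;> simp

theorem constantCoeff_pSing {p : ℕ} {F : PowerSeries R}
    (hF : PowerSeries.constantCoeff F = 0) :
    PowerSeries.constantCoeff (pSingularPart p F) = 0 := by
  rw [← PowerSeries.coeff_zero_eq_constantCoeff] at hF ⊢
  rw [coeff_pSing', if_pos (dvd_zero p), hF]

theorem constantCoeff_pReg (p : ℕ) (F : PowerSeries R) :
    PowerSeries.constantCoeff (pRegularPart p F) = 0 := by
  rw [← PowerSeries.coeff_zero_eq_constantCoeff]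
  rw [coeff_pReg', if_pos (dvd_zero p)]

theorem psupp_mul {p : ℕ} {E F : PowerSeries R}
    (hE : ∀ n, ¬ p ∣ n → PowerSeries.coeff n E = 0)
    (hF : ∀ n, ¬ p ∣ n → PowerSeries.coeff n F = 0) :
    ∀ n, ¬ p ∣ n → PowerSeries.coeff n (E * F) = 0 := by
  intro n hn
  rw [PowerSeries.coeff_mul]
  apply Finset.sum_eq_zero
  intro ij hij
  rw [Finset.HasAntidiagonal.mem_antidiagonal] at hij
  by_cases h : p ∣ ij.1
  · have h2 : ¬ p ∣ ij.2 := fun h2 => hn (hij ▸ dvd_add h h2)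
    rw [hF _ h2, mul_zero]
  · rw [hE _ h, zero_mul]

theorem psupp_pow {p : ℕ} {F : PowerSeries R}
    (hF : ∀ n, ¬ p ∣ n → PowerSeries.coeff n F = 0) (k : ℕ) :
    ∀ n, ¬ p ∣ n → PowerSeries.coeff n (F ^ k) = 0 := by
  induction k with
  | zero =>
    intro n hn
    have : n ≠ 0 := fun h => hn (h ▸ dvd_zero p)
    rw [pow_zero, PowerSeries.coeff_one, if_neg this]
  | succ k ih =>
    intro n hn
    rw [pow_succ]
    exact psupp_mul ih hF n hn

theorem psupp_pSing (p : ℕ) (F : PowerSeries R) :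
    ∀ n, ¬ p ∣ n → PowerSeries.coeff n (pSingularPart p F) = 0 := by
  intro n hn
  rw [coeff_pSing', if_neg hn]

theorem sing_mul {p : ℕ} {E : PowerSeries R}
    (hE : ∀ n, ¬ p ∣ n → PowerSeries.coeff n E = 0) (F : PowerSeries R) :
    pSingularPart p (E * F) = E * pSingularPart p F := by
  ext n
  rw [coeff_pSing']
  by_cases hn : p ∣ n
  · rw [if_pos hn, PowerSeries.coeff_mul, PowerSeries.coeff_mul]
    apply Finset.sum_congr rfl
    intro ij hij
    rw [Finset.HasAntidiagonal.mem_antidiagonal] at hij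
    by_cases hi : p ∣ ij.1
    · have h2 : ij.2 = n - ij.1 := by omega
      have hj : p ∣ ij.2 := h2 ▸ Nat.dvd_sub hn hi
      rw [coeff_pSing', if_pos hj]
    · rw [hE _ hi, zero_mul, zero_mul]
  · rw [if_neg hn, PowerSeries.coeff_mul]
    symm
    apply Finset.sum_eq_zero
    intro ij hij
    rw [Finset.HasAntidiagonal.mem_antidiagonal] at hij
    by_cases hi : p ∣ ij.1
    · have hj : ¬ p ∣ ij.2 := fun h => hn (hij ▸ dvd_add hi h)
      rw [coeff_pSing', if_neg hj, mul_zero]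
    · rw [hE _ hi, zero_mul]

theorem reg_mul {p : ℕ} {E : PowerSeries R}
    (hE : ∀ n, ¬ p ∣ n → PowerSeries.coeff n E = 0) (F : PowerSeries R) :
    pRegularPart p (E * F) = E * pRegularPart p F := by
  ext n
  rw [coeff_pReg']
  by_cases hn : p ∣ n
  · rw [if_pos hn, PowerSeries.coeff_mul]
    symm
    apply Finset.sum_eq_zero
    intro ij hij
    rw [Finset.HasAntidiagonal.mem_antidiagonal] at hij
    by_cases hi : p ∣ ij.1
    · have h2 : ij.2 = n - ij.1 := by omega
      have hj : p ∣ ij.2 := h2 ▸ Nat.dvd_sub hn hi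
      rw [coeff_pReg', if_pos hj, mul_zero]
    · rw [hE _ hi, zero_mul]
  · rw [if_neg hn, PowerSeries.coeff_mul, PowerSeries.coeff_mul]
    apply Finset.sum_congr rfl
    intro ij hij
    rw [Finset.HasAntidiagonal.mem_antidiagonal] at hij
    by_cases hi : p ∣ ij.1
    · have hj : ¬ p ∣ ij.2 := fun h => hn (hij ▸ dvd_add hi h)
      rw [coeff_pReg', if_neg hj]
    · rw [hE _ hi, zero_mul, zero_mul]

variable [Algebra ℚ R]

theorem coeff_psExp_ext {C : PowerSeries R} (hC : PowerSeries.constantCoeff C = 0)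
    {n N : ℕ} (h : n ≤ N) :
    PowerSeries.coeff n (psExp C) = ∑ k ∈ Finset.range (N + 1),
      ((k.factorial : ℚ)⁻¹) • PowerSeries.coeff n (C ^ k) := by
  rw [psExp, PowerSeries.coeff_mk]
  apply Finset.sum_subset
  · exact Finset.range_subset_range.mpr (by omega)
  · intro k hk hk'
    rw [Finset.mem_range] at hk hk'
    rw [coeff_pow_eq_zero' hC (by omega), smul_zero]

theorem constantCoeff_psExp (C : PowerSeries R) :
    PowerSeries.constantCoeff (psExp C) = 1 := by
  rw [← PowerSeries.coeff_zero_eq_constantCoeff, psExp, PowerSeries.coeff_mk]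
  simp

theorem deriv_psExp {C : PowerSeries R} (hC : PowerSeries.constantCoeff C = 0) :
    d⁄dX R (psExp C) = d⁄dX R C * psExp C := by
  ext n
  have lhs : PowerSeries.coeff n (d⁄dX R (psExp C)) =
      ∑ j ∈ Finset.range (n + 1),
        ((j.factorial : ℚ)⁻¹) • PowerSeries.coeff n (C ^ j * d⁄dX R C) := by
    rw [PowerSeries.coeff_derivative, psExp, PowerSeries.coeff_mk, Finset.sum_mul]
    have step : ∀ k : ℕ, ((k.factorial : ℚ)⁻¹ • PowerSeries.coeff (n + 1) (C ^ k)) * ((n : R) + 1)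
        = ((k : ℚ) * (k.factorial : ℚ)⁻¹) • PowerSeries.coeff n (C ^ (k - 1) * d⁄dX R C) := by
      intro k
      rw [smul_mul_assoc, ← PowerSeries.coeff_derivative, Derivation.leibniz_pow,
        smul_eq_mul, map_nsmul]
      rw [← Nat.cast_smul_eq_nsmul ℚ k (PowerSeries.coeff n (C ^ (k - 1) * d⁄dX R C)),
        smul_smul, mul_comm ((k.factorial : ℚ)⁻¹)]
    simp only [step]
    rw [Finset.sum_range_succ']
    simp only [Nat.cast_zero, zero_mul, zero_smul, add_zero]
    apply Finset.sum_congr rfl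
    intro j _
    have h1 : (((j + 1 : ℕ) : ℚ) * (((j+1).factorial : ℚ))⁻¹) = ((j.factorial : ℚ))⁻¹ := by
      rw [Nat.factorial_succ, Nat.cast_mul, mul_inv]
      have hj : ((j : ℚ) + 1) ≠ 0 := by positivity
      push_cast
      field_simp
    rw [h1]
    congr 1
  have rhs : PowerSeries.coeff n (d⁄dX R C * psExp C) =
      ∑ j ∈ Finset.range (n + 1),
        ((j.factorial : ℚ)⁻¹) • PowerSeries.coeff n (C ^ j * d⁄dX R C) := by
    rw [PowerSeries.coeff_mul]
    have step : ∀ ij ∈ Finset.HasAntidiagonal.antidiagonal n,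
        PowerSeries.coeff ij.1 (d⁄dX R C) * PowerSeries.coeff ij.2 (psExp C) =
        ∑ k ∈ Finset.range (n + 1), ((k.factorial : ℚ)⁻¹) •
          (PowerSeries.coeff ij.1 (d⁄dX R C) * PowerSeries.coeff ij.2 (C ^ k)) := by
      intro ij hij
      rw [Finset.HasAntidiagonal.mem_antidiagonal] at hij
      rw [coeff_psExp_ext hC (show ij.2 ≤ n by omega), Finset.mul_sum]
      apply Finset.sum_congr rfl
      intro k _
      rw [mul_smul_comm]
    rw [Finset.sum_congr rfl step, Finset.sum_comm]
    apply Finset.sum_congr rfl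
    intro k _
    rw [← Finset.smul_sum, mul_comm (C ^ k), PowerSeries.coeff_mul]
  rw [lhs, rhs]

theorem ode_unique {G F H : PowerSeries R} (hF : d⁄dX R F = G * F) (hH : d⁄dX R H = G * H)
    (h0 : PowerSeries.coeff 0 F = PowerSeries.coeff 0 H) : F = H := by
  ext n
  induction n using Nat.strong_induction_on with
  | _ n ih =>
    match n with
    | 0 => exact h0
    | (m + 1) =>
      have hD : PowerSeries.coeff m (d⁄dX R F) = PowerSeries.coeff m (d⁄dX R H) := by
        rw [hF, hH, PowerSeries.coeff_mul, PowerSeries.coeff_mul]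
        apply Finset.sum_congr rfl
        intro ij hij
        rw [Finset.HasAntidiagonal.mem_antidiagonal] at hij
        rw [ih ij.2 (by omega)]
      rw [PowerSeries.coeff_derivative, PowerSeries.coeff_derivative] at hD
      have hsm : ((m : ℚ) + 1) • PowerSeries.coeff (m + 1) F
          = ((m : ℚ) + 1) • PowerSeries.coeff (m + 1) H := by
        rw [Algebra.smul_def, Algebra.smul_def, map_add, map_natCast, map_one,
          mul_comm _ (PowerSeries.coeff (m+1) F), mul_comm _ (PowerSeries.coeff (m+1) H)]
        exact hD
      have hm : ((m : ℚ) + 1) ≠ 0 := by positivity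
      have := congrArg (fun x => ((m : ℚ) + 1)⁻¹ • x) hsm
      simpa [smul_smul, inv_mul_cancel₀ hm] using this

end Aux

theorem psupp_psExp {R : Type*} [CommRing R] [Algebra ℚ R] {p : ℕ} {C : PowerSeries R}
    (hC : ∀ n, ¬ p ∣ n → PowerSeries.coeff n C = 0) :
    ∀ n, ¬ p ∣ n → PowerSeries.coeff n (psExp C) = 0 := by
  intro n hn
  rw [psExp, PowerSeries.coeff_mk]
  exact Finset.sum_eq_zero fun k _ => by rw [psupp_pow hC k n hn, smul_zero]


/-- with `X = exp C`, `C = Σ_{n≥1} (cₙ/n) tⁿ` (so `cₙ = n · coeff n C`),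
`U`/`V` the `p`-singular/`p`-regular parts of `X` and `Y = V·U⁻¹ = Σ yₙ tⁿ`,
every `yₙ` (`n ≥ 1`) lies in the `ℚ`-subalgebra of `R` generated by `{cᵢ : i ≥ 1, p ∤ i}`. -/
theorem stmt1 (p : ℕ) (hp : p.Prime) (R : Type*) [CommRing R] [Algebra ℚ R]
    (C X Y : PowerSeries R)
    (hC : PowerSeries.constantCoeff C = 0)
    (hX : X = psExp C)
    (hY : Y * pSingularPart p X = pRegularPart p X) :
    ∀ n : ℕ, 1 ≤ n → PowerSeries.coeff n Y ∈
      Algebra.adjoin ℚ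
        {r : R | ∃ i : ℕ, 1 ≤ i ∧ ¬ p ∣ i ∧ r = (i : R) * PowerSeries.coeff i C} := by
  classical
  set A := Algebra.adjoin ℚ
      {r : R | ∃ i : ℕ, 1 ≤ i ∧ ¬ p ∣ i ∧ r = (i : R) * PowerSeries.coeff i C} with hA
  set Creg := pRegularPart p C with hCregdef
  set Csing := pSingularPart p C with hCsingdef
  have hCreg0 : PowerSeries.constantCoeff Creg = 0 := constantCoeff_pReg p C
  have hCsing0 : PowerSeries.constantCoeff Csing = 0 := constantCoeff_pSing hC
  set Er := psExp Creg with hErdef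
  set Es := psExp Csing with hEsdef
  have hXfac : X = Es * Er := by
    apply ode_unique (G := d⁄dX R C)
    · rw [hX]; exact deriv_psExp hC
    · have h1 : d⁄dX R (Es * Er) = Es * (d⁄dX R Creg * Er) + Er * (d⁄dX R Csing * Es) := by
        rw [Derivation.leibniz, smul_eq_mul, smul_eq_mul, hEsdef, hErdef,
          deriv_psExp hCreg0, deriv_psExp hCsing0]
      have h2 : d⁄dX R Creg + d⁄dX R Csing = d⁄dX R C := by
        rw [← map_add, pReg_add_pSing]
      rw [h1, ← h2]; ring
    · rw [PowerSeries.coeff_zero_eq_constantCoeff, hX, constantCoeff_psExp, map_mul,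
        hEsdef, hErdef, constantCoeff_psExp, constantCoeff_psExp, one_mul]
  have hEssupp : ∀ n, ¬ p ∣ n → PowerSeries.coeff n Es = 0 :=
    psupp_psExp (psupp_pSing p C)
  set Sr := pSingularPart p Er with hSrdef
  set Rr := pRegularPart p Er with hRrdef
  have hU : pSingularPart p X = Es * Sr := by rw [hXfac, sing_mul hEssupp]
  have hV : pRegularPart p X = Es * Rr := by rw [hXfac, reg_mul hEssupp]
  have hEsUnit : IsUnit Es := PowerSeries.isUnit_iff_constantCoeff.mpr
    (by rw [hEsdef, constantCoeff_psExp]; exact isUnit_one)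
  have hYSr : Y * Sr = Rr := by
    apply hEsUnit.mul_left_cancel
    calc Es * (Y * Sr) = Y * (Es * Sr) := by ring
    _ = Y * pSingularPart p X := by rw [hU]
    _ = pRegularPart p X := hY
    _ = Es * Rr := hV
  have hCreg_mem : ∀ n, PowerSeries.coeff n Creg ∈ A := by
    intro n
    rw [hCregdef, coeff_pReg']
    by_cases hn : p ∣ n
    · rw [if_pos hn]; exact zero_mem A
    · rw [if_neg hn]
      have hn0 : n ≠ 0 := fun h => hn (h ▸ dvd_zero p)
      have hgen : (n : R) * PowerSeries.coeff n C ∈ A :=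
        Algebra.subset_adjoin ⟨n, by omega, hn, rfl⟩
      have key : PowerSeries.coeff n C
          = ((n : ℚ))⁻¹ • ((n : R) * PowerSeries.coeff n C) := by
        have h3 : (n : R) * PowerSeries.coeff n C = ((n : ℚ)) • PowerSeries.coeff n C := by
          rw [Algebra.smul_def, map_natCast]
        rw [h3, smul_smul, inv_mul_cancel₀ (Nat.cast_ne_zero.mpr hn0), one_smul]
      rw [key]
      exact A.smul_mem hgen _
  have hmul_mem : ∀ (F G : PowerSeries R), (∀ n, PowerSeries.coeff n F ∈ A) →
      (∀ n, PowerSeries.coeff n G ∈ A) → ∀ n, PowerSeries.coeff n (F * G) ∈ A := by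
    intro F G hF hG n
    rw [PowerSeries.coeff_mul]
    exact sum_mem fun ij _ => mul_mem (hF _) (hG _)
  have hpow_mem : ∀ (k : ℕ) (n : ℕ), PowerSeries.coeff n (Creg ^ k) ∈ A := by
    intro k
    induction k with
    | zero =>
      intro n
      rw [pow_zero, PowerSeries.coeff_one]
      split_ifs
      exacts [one_mem A, zero_mem A]
    | succ k ih =>
      intro n
      rw [pow_succ]
      exact hmul_mem _ _ ih hCreg_mem n
  have hEr_mem : ∀ n, PowerSeries.coeff n Er ∈ A := by
    intro n
    rw [hErdef, psExp, PowerSeries.coeff_mk]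
    exact sum_mem fun k _ => A.smul_mem (hpow_mem k n) _
  have hSr_mem : ∀ n, PowerSeries.coeff n Sr ∈ A := by
    intro n
    rw [hSrdef, coeff_pSing']
    split_ifs
    exacts [hEr_mem n, zero_mem A]
  have hRr_mem : ∀ n, PowerSeries.coeff n Rr ∈ A := by
    intro n
    rw [hRrdef, coeff_pReg']
    split_ifs
    exacts [zero_mem A, hEr_mem n]
  have hS0 : PowerSeries.coeff 0 Sr = 1 := by
    rw [hSrdef, coeff_pSing', if_pos (dvd_zero p), PowerSeries.coeff_zero_eq_constantCoeff,
      hErdef, constantCoeff_psExp]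
  have main : ∀ n, PowerSeries.coeff n Y ∈ A := by
    intro n
    induction n using Nat.strong_induction_on with
    | _ n ih =>
      have hc : PowerSeries.coeff n Rr = ∑ i ∈ Finset.range n,
          PowerSeries.coeff i Y * PowerSeries.coeff (n - i) Sr
          + PowerSeries.coeff n Y := by
        rw [← hYSr, PowerSeries.coeff_mul, Finset.Nat.sum_antidiagonal_eq_sum_range_succ_mk,
          Finset.sum_range_succ, Nat.sub_self, hS0, mul_one]
      have hy : PowerSeries.coeff n Y = PowerSeries.coeff n Rr - ∑ i ∈ Finset.range n,
          PowerSeries.coeff i Y * PowerSeries.coeff (n - i) Sr := by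
        rw [hc]; ring
      rw [hy]
      exact sub_mem (hRr_mem n) (sum_mem fun i hi =>
        mul_mem (ih i (Finset.mem_range.mp hi)) (hSr_mem _))
  intro n _
  exact main n
end

section
/- Let p be a prime and R a commutative ring. Let X(t) = Σ_{n≥0} x_n t^n ∈ R[[t]] with x_0 = 1. Let U be the p-singular part of X and V the p-regular part of X; since U has constant term 1 it is invertible, and we set Y(t) = V(t)·U(t)^{-1} = Σ_{n≥0} y_n t^n. Then for every n ≥ 1, the element y_n − x_n lies in the ℤ-submodule of R spanned by the products x_{λ_1}·x_{λ_2}···x_{λ_k} over all finite tuples (λ_1,…,λ_k) of positive integers with λ_1 + ⋯ + λ_k = n and with at least one λ_i divisible by p. -/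
open PowerSeries

/-- over any commutative ring, if `X = Σ xₙ tⁿ` has `x₀ = 1`,
`U`/`V` are its `p`-singular/`p`-regular parts and `Y = V·U⁻¹ = Σ yₙ tⁿ`
(equivalently `Y·U = V`), then for `n ≥ 1`, `yₙ - xₙ` lies in the `ℤ`-span of the
products `x_{λ₁}⋯x_{λ_k}` over tuples of positive integers summing to `n`
with at least one part divisible by `p`. -/
theorem stmt2 (p : ℕ) (hp : p.Prime) (R : Type*) [CommRing R]
    (X Y : PowerSeries R)
    (hX0 : PowerSeries.constantCoeff X = 1)
    (hY : Y * pSingularPart p X = pRegularPart p X) :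
    ∀ n : ℕ, 1 ≤ n →
      PowerSeries.coeff n Y - PowerSeries.coeff n X ∈
        Submodule.span ℤ
          {r : R | ∃ l : List ℕ, (∀ i ∈ l, 0 < i) ∧ l.sum = n ∧ (∃ i ∈ l, p ∣ i) ∧
            r = (l.map fun i => PowerSeries.coeff i X).prod} := by
  classical
  set x : ℕ → R := fun i => PowerSeries.coeff i X with hxdef
  set y : ℕ → R := fun i => PowerSeries.coeff i Y with hydef
  set Sset : ℕ → Set R := fun n =>
    {r : R | ∃ l : List ℕ, (∀ i ∈ l, 0 < i) ∧ l.sum = n ∧ (∃ i ∈ l, p ∣ i) ∧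
      r = (l.map fun i => x i).prod} with hSdef
  have hx0 : x 0 = 1 := by simpa [hxdef, PowerSeries.coeff_zero_eq_constantCoeff] using hX0
  have hcoeff : ∀ n, (∑ q ∈ Finset.HasAntidiagonal.antidiagonal n,
      y q.1 * (if p ∣ q.2 then x q.2 else 0)) = if p ∣ n then 0 else x n := by
    intro n
    have h := congrArg (PowerSeries.coeff n) hY
    rw [PowerSeries.coeff_mul] at h
    simpa [pSingularPart, pRegularPart, PowerSeries.coeff_mk, hxdef, hydef, mul_ite] using h
  have hy0 : y 0 = 0 := by
    have h := hcoeff 0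
    simpa [hx0] using h
  have hmul : ∀ m k : ℕ, 0 < k → p ∣ k → ∀ r ∈ Submodule.span ℤ (Sset m),
      r * x k ∈ Submodule.span ℤ (Sset (m + k)) := by
    intro m k hk hpk r hr
    induction hr using Submodule.span_induction with
    | mem r hrmem =>
        obtain ⟨l, hl1, hl2, _, hl4⟩ := hrmem
        refine Submodule.subset_span ⟨l ++ [k], ?_, ?_, ⟨k, by simp, hpk⟩, ?_⟩
        · intro i hi
          rcases List.mem_append.mp hi with h | h
          · exact hl1 i h
          · simp at h; omega
        · simp [hl2]
        · simp [hl4]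
    | zero => simp
    | add a b _ _ ha hb => simpa [add_mul] using Submodule.add_mem _ ha hb
    | smul z a _ ha => simpa [smul_mul_assoc, mul_assoc] using Submodule.smul_mem _ z ha
  intro n
  induction n using Nat.strong_induction_on with
  | _ n ih =>
    intro hn
    have h := hcoeff n
    have hmem : ((n, 0) : ℕ × ℕ) ∈ Finset.HasAntidiagonal.antidiagonal n := by simp
    rw [← Finset.add_sum_erase _ _ hmem] at h
    simp only [dvd_zero, if_true, hx0, mul_one] at h
    have hyn : y n - x n = (-(if p ∣ n then x n else 0)) -
        ∑ q ∈ (Finset.HasAntidiagonal.antidiagonal n).erase (n, 0),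
          y q.1 * (if p ∣ q.2 then x q.2 else 0) := by
      have := eq_sub_of_add_eq h
      rw [this]
      by_cases hpn : p ∣ n <;> simp [hpn] <;> ring
    rw [hyn]
    refine Submodule.sub_mem _ (Submodule.neg_mem _ ?_) (Submodule.sum_mem _ ?_)
    · by_cases hpn : p ∣ n
      · simp only [hpn, if_true]
        exact Submodule.subset_span ⟨[n], by intro i hi; simp at hi; omega,
          by simp, ⟨n, by simp, hpn⟩, by simp⟩
      · simp only [hpn, if_false]
        exact Submodule.zero_mem _
    · intro q hq
      obtain ⟨hne, hq'⟩ := Finset.mem_erase.mp hq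
      have hsum : q.1 + q.2 = n := Finset.HasAntidiagonal.mem_antidiagonal.mp hq'
      have hq2 : 0 < q.2 := by
        rcases Nat.eq_zero_or_pos q.2 with h0 | h0
        · exfalso; apply hne
          have : q.1 = n := by omega
          exact Prod.ext this h0
        · exact h0
      by_cases hpj : p ∣ q.2
      · simp only [hpj, if_true]
        rcases Nat.eq_zero_or_pos q.1 with h1 | h1
        · simpa [h1, hy0] using Submodule.zero_mem (Submodule.span ℤ (Sset n))
        · have hlt : q.1 < n := by omega
          have hih := ih q.1 hlt h1
          have heq : y q.1 * x q.2 = (y q.1 - x q.1) * x q.2 + x q.1 * x q.2 := by ring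
          rw [heq]
          refine Submodule.add_mem _ ?_ ?_
          · have := hmul q.1 q.2 hq2 hpj _ hih
            rwa [hsum] at this
          · refine Submodule.subset_span ⟨[q.1, q.2], ?_, by simp [hsum],
              ⟨q.2, by simp, hpj⟩, by simp⟩
            intro i hi; simp at hi; rcases hi with h | h <;> omega
      · simp only [hpj, if_false, mul_zero]
        exact Submodule.zero_mem _
end

section
/- Let p be a prime and R a commutative ℚ-algebra. Let X, C ∈ R[[t]] with C having zero constant term and X = exp(C). Let U and V be the p-singular and p-regular parts of X, and let A and B be the p-singular and p-regular parts of C. Write ch_p(B) for the p-singular part of exp(B) and sh_p(B) for the p-regular part of exp(B). Then U = exp(A)·ch_p(B) and V = exp(A)·sh_p(B). -/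
open PowerSeries Finset

section Aux
variable {R : Type*} [CommRing R]

lemma coeff_pow_eq_zero'_s4 {A : PowerSeries R} (hA : constantCoeff A = 0)
    {n i : ℕ} (h : n < i) : coeff n (A ^ i) = 0 :=
  X_pow_dvd_iff.mp (pow_dvd_pow_of_dvd (X_dvd_iff.mpr hA) i) n h

lemma coeff_pow_mul_pow_eq_zero {A B : PowerSeries R}
    (hA : constantCoeff A = 0) (hB : constantCoeff B = 0)
    {n i j : ℕ} (h : n < i + j) : coeff n (A ^ i * B ^ j) = 0 := by
  have hdvd : (X : PowerSeries R) ^ (i + j) ∣ A ^ i * B ^ j := by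
    rw [pow_add]
    exact mul_dvd_mul (pow_dvd_pow_of_dvd (X_dvd_iff.mpr hA) i)
      (pow_dvd_pow_of_dvd (X_dvd_iff.mpr hB) j)
  exact X_pow_dvd_iff.mp hdvd n h

lemma sum_triangle {M : Type*} [AddCommMonoid M] (n : ℕ) (f : ℕ → ℕ → M)
    (hf : ∀ i j, n < i + j → f i j = 0) :
    ∑ k ∈ range (n + 1), ∑ i ∈ range (k + 1), f i (k - i)
      = ∑ i ∈ range (n + 1), ∑ j ∈ range (n + 1), f i j := by
  rw [Finset.sum_sigma', Finset.sum_sigma']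
  rw [show ∑ x ∈ (range (n+1)).sigma (fun i => range (n+1)), f x.1 x.2
      = ∑ x ∈ ((range (n+1)).sigma (fun i => range (n+1))).filter
          (fun x => x.1 + x.2 ≤ n), f x.1 x.2 from
    (Finset.sum_filter_of_ne (fun x _ hx => by
      by_contra h
      exact hx (hf x.1 x.2 (by omega)))).symm]
  refine Finset.sum_nbij' (fun x => ⟨x.2, x.1 - x.2⟩) (fun y => ⟨y.1 + y.2, y.1⟩) ?_ ?_ ?_ ?_ ?_
  · rintro ⟨k, i⟩ hx
    simp only [mem_sigma, mem_range, mem_filter] at hx ⊢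
    omega
  · rintro ⟨i, j⟩ hy
    simp only [mem_sigma, mem_range, mem_filter] at hy ⊢
    omega
  · rintro ⟨k, i⟩ hx
    simp only [mem_sigma, mem_range] at hx
    simp only [Sigma.mk.inj_iff]
    constructor
    · omega
    · exact heq_of_eq rfl
  · rintro ⟨i, j⟩ hy
    simp only [Sigma.mk.inj_iff]
    refine ⟨trivial, heq_of_eq ?_⟩
    omega
  · rintro ⟨k, i⟩ hx; rfl

end Aux

section ExpAdd
variable {R : Type*} [CommRing R] [Algebra ℚ R]

lemma psExp_add {A B : PowerSeries R}
    (hA : constantCoeff A = 0) (hB : constantCoeff B = 0) :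
    psExp (A + B) = psExp A * psExp B := by
  ext n
  have natsmul : ∀ (x : R) (m : ℕ), x * (m : R) = (m : ℚ) • x := fun x m => by
    rw [mul_comm, ← map_natCast (algebraMap ℚ R) m, ← Algebra.smul_def]
  have key : ∀ i k : ℕ, i ≤ k →
      ((k.factorial : ℚ))⁻¹ * (k.choose i : ℚ) =
        (i.factorial : ℚ)⁻¹ * ((k - i).factorial : ℚ)⁻¹ := by
    intro i k h
    have h1 := Nat.choose_mul_factorial_mul_factorial h
    have h2 : (k.choose i : ℚ) * (i.factorial : ℚ) * ((k - i).factorial : ℚ)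
        = (k.factorial : ℚ) := by exact_mod_cast congrArg (Nat.cast (R := ℚ)) h1
    have b0 : (i.factorial : ℚ) ≠ 0 := Nat.cast_ne_zero.mpr i.factorial_ne_zero
    have c0 : ((k - i).factorial : ℚ) ≠ 0 := Nat.cast_ne_zero.mpr (k - i).factorial_ne_zero
    have a0 : (k.factorial : ℚ) ≠ 0 := Nat.cast_ne_zero.mpr k.factorial_ne_zero
    field_simp
    linarith [h2]
  set f : ℕ → ℕ → R := fun i j =>
    ((i.factorial : ℚ)⁻¹ * (j.factorial : ℚ)⁻¹) • coeff n (A ^ i * B ^ j) with hf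
  have hfz : ∀ i j, n < i + j → f i j = 0 := fun i j h => by
    rw [hf]; simp [coeff_pow_mul_pow_eq_zero hA hB h]
  have hL : coeff n (psExp (A + B))
      = ∑ k ∈ range (n + 1), ∑ i ∈ range (k + 1), f i (k - i) := by
    rw [psExp, coeff_mk]
    refine Finset.sum_congr rfl fun k _ => ?_
    rw [add_pow, map_sum, Finset.smul_sum]
    refine Finset.sum_congr rfl fun i hi => ?_
    rw [mem_range] at hi
    have hc : ((k.choose i : ℕ) : PowerSeries R) = C ((k.choose i : ℕ) : R) := by
      rw [map_natCast]
    rw [hc, coeff_mul_C, natsmul, smul_smul, key i k (by omega)]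
  have hR : coeff n (psExp A * psExp B)
      = ∑ i ∈ range (n + 1), ∑ j ∈ range (n + 1), f i j := by
    rw [coeff_mul]
    have step1 : ∀ ij ∈ antidiagonal n,
        coeff ij.1 (psExp A) * coeff ij.2 (psExp B)
          = ∑ i ∈ range (n + 1), ∑ j ∈ range (n + 1),
              ((i.factorial : ℚ)⁻¹ * (j.factorial : ℚ)⁻¹) •
                (coeff ij.1 (A ^ i) * coeff ij.2 (B ^ j)) := by
      rintro ⟨a, b⟩ hab
      rw [Finset.HasAntidiagonal.mem_antidiagonal] at hab
      have ha : coeff a (psExp A) = ∑ i ∈ range (n + 1), (i.factorial : ℚ)⁻¹ • coeff a (A ^ i) := by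
        rw [psExp, coeff_mk]
        refine Finset.sum_subset (Finset.range_subset_range.mpr (by omega)) fun i _ hi => ?_
        rw [mem_range, not_lt] at hi
        rw [coeff_pow_eq_zero'_s4 hA (by omega), smul_zero]
      have hb : coeff b (psExp B) = ∑ j ∈ range (n + 1), (j.factorial : ℚ)⁻¹ • coeff b (B ^ j) := by
        rw [psExp, coeff_mk]
        refine Finset.sum_subset (Finset.range_subset_range.mpr (by omega)) fun j _ hj => ?_
        rw [mem_range, not_lt] at hj
        rw [coeff_pow_eq_zero'_s4 hB (by omega), smul_zero]
      rw [ha, hb, Finset.sum_mul_sum]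
      refine Finset.sum_congr rfl fun i _ => Finset.sum_congr rfl fun j _ => ?_
      rw [smul_mul_smul_comm]
    rw [Finset.sum_congr rfl step1, Finset.sum_comm]
    refine Finset.sum_congr rfl fun i _ => ?_
    rw [Finset.sum_comm]
    refine Finset.sum_congr rfl fun j _ => ?_
    rw [← Finset.smul_sum, ← coeff_mul]
  rw [hL, hR, sum_triangle n f hfz]
end ExpAdd

section Parts
variable {R : Type*} [CommRing R] (p : ℕ)

/-- being supported on multiples of `p` -/
def pSupp (F : PowerSeries R) : Prop := ∀ n, ¬ p ∣ n → coeff n F = 0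

lemma pSupp_mul {F G : PowerSeries R} (hF : pSupp p F) (hG : pSupp p G) :
    pSupp p (F * G) := by
  intro n hn
  rw [coeff_mul]
  refine Finset.sum_eq_zero fun ij hij => ?_
  rw [Finset.HasAntidiagonal.mem_antidiagonal] at hij
  by_cases hi : p ∣ ij.1
  · have : ¬ p ∣ ij.2 := fun h => hn (hij ▸ dvd_add hi h)
    rw [hG _ this, mul_zero]
  · rw [hF _ hi, zero_mul]

lemma pSupp_pow {F : PowerSeries R} (hF : pSupp p F) (k : ℕ) : pSupp p (F ^ k) := by
  induction k with
  | zero =>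
    intro n hn
    rw [pow_zero, coeff_one, if_neg (fun h : n = 0 => hn (h ▸ dvd_zero p))]
  | succ k ih =>
    rw [pow_succ]
    exact pSupp_mul p ih hF

lemma pSupp_psExp {R : Type*} [CommRing R] [Algebra ℚ R] {F : PowerSeries R}
    (hF : pSupp p F) : pSupp p (psExp F) := by
  intro n hn
  rw [psExp, coeff_mk]
  exact Finset.sum_eq_zero fun k _ => by rw [pSupp_pow p hF k n hn, smul_zero]

lemma pSingularPart_mul_left {S : PowerSeries R} (hS : pSupp p S) (F : PowerSeries R) :
    pSingularPart p (S * F) = S * pSingularPart p F := by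
  ext n
  rw [pSingularPart, coeff_mk, coeff_mul, coeff_mul]
  by_cases hn : p ∣ n
  · rw [if_pos hn]
    refine Finset.sum_congr rfl fun ij hij => ?_
    rw [Finset.HasAntidiagonal.mem_antidiagonal] at hij
    rw [pSingularPart, coeff_mk]
    by_cases hj : p ∣ ij.2
    · rw [if_pos hj]
    · rw [if_neg hj, mul_zero, hS _ (fun h => hj (by subst hij; exact (Nat.dvd_add_right h).mp hn)), zero_mul]
  · rw [if_neg hn]
    refine (Finset.sum_eq_zero fun ij hij => ?_).symm
    rw [Finset.HasAntidiagonal.mem_antidiagonal] at hij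
    rw [pSingularPart, coeff_mk]
    by_cases hj : p ∣ ij.2
    · rw [hS _ (fun h => hn (by subst hij; exact dvd_add h hj)), zero_mul]
    · rw [if_neg hj, mul_zero]

lemma pRegularPart_mul_left {S : PowerSeries R} (hS : pSupp p S) (F : PowerSeries R) :
    pRegularPart p (S * F) = S * pRegularPart p F := by
  ext n
  rw [pRegularPart, coeff_mk, coeff_mul, coeff_mul]
  by_cases hn : p ∣ n
  · rw [if_pos hn]
    refine (Finset.sum_eq_zero fun ij hij => ?_).symm
    rw [Finset.HasAntidiagonal.mem_antidiagonal] at hij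
    rw [pRegularPart, coeff_mk]
    by_cases hj : p ∣ ij.2
    · rw [if_pos hj, mul_zero]
    · rw [hS _ (fun h => hj (by subst hij; exact (Nat.dvd_add_right h).mp hn)), zero_mul]
  · rw [if_neg hn]
    refine Finset.sum_congr rfl fun ij hij => ?_
    rw [Finset.HasAntidiagonal.mem_antidiagonal] at hij
    rw [pRegularPart, coeff_mk]
    by_cases hj : p ∣ ij.2
    · rw [if_pos hj, mul_zero, hS _ (fun h => hn (by subst hij; exact dvd_add h hj)), zero_mul]
    · rw [if_neg hj]

end Parts

/-- let `X = exp C` with `C` of zero constant term, let `U`,`V` be the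
`p`-singular and `p`-regular parts of `X`, and `A`,`B` the `p`-singular and `p`-regular
parts of `C`.  With `ch_p(B)` the `p`-singular part of `exp B` and `sh_p(B)` its
`p`-regular part, one has `U = exp(A)·ch_p(B)` and `V = exp(A)·sh_p(B)`. -/
theorem stmt4 (p : ℕ) (hp : p.Prime) (R : Type*) [CommRing R] [Algebra ℚ R]
    (C X : PowerSeries R)
    (hC : PowerSeries.constantCoeff C = 0)
    (hX : X = psExp C) :
    pSingularPart p X =
        psExp (pSingularPart p C) * pSingularPart p (psExp (pRegularPart p C)) ∧
      pRegularPart p X =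
        psExp (pSingularPart p C) * pRegularPart p (psExp (pRegularPart p C)) := by
  set A := pSingularPart p C with hA
  set B := pRegularPart p C with hB
  have hAB : A + B = C := by
    ext n
    rw [map_add, hA, hB, pSingularPart, pRegularPart, coeff_mk, coeff_mk]
    split <;> ring
  have hA0 : constantCoeff A = 0 := by
    rw [← coeff_zero_eq_constantCoeff, hA, pSingularPart, coeff_mk,
      if_pos (dvd_zero p), coeff_zero_eq_constantCoeff, hC]
  have hB0 : constantCoeff B = 0 := by
    rw [← coeff_zero_eq_constantCoeff, hB, pRegularPart, coeff_mk, if_pos (dvd_zero p)]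
  have hSuppA : pSupp p A := fun n hn => by
    rw [hA, pSingularPart, coeff_mk, if_neg hn]
  have hSuppExpA : pSupp p (psExp A) := pSupp_psExp p hSuppA
  have hXeq : X = psExp A * psExp B := by
    rw [hX, ← hAB, psExp_add hA0 hB0]
  constructor
  · rw [hXeq, pSingularPart_mul_left p hSuppExpA]
  · rw [hXeq, pRegularPart_mul_left p hSuppExpA]
end

section
/- Let p be a prime. In the polynomial ring A = ℚ[x_1, x_2, x_3, …] (a polynomial variable x_n for each integer n ≥ 1), form the power series X(t) = 1 + Σ_{n≥1} x_n t^n ∈ A[[t]], let U and V be its p-singular and p-regular parts, and set Y(t) = V(t)·U(t)^{-1} = Σ_{n≥0} y_n t^n. Then the intersection (inside A) of the ℤ-subalgebra generated by {x_n : n ≥ 1} with the ℚ-subalgebra generated by {y_n : n ≥ 1, p ∤ n} equals the ℤ-subalgebra generated by {y_n : n ≥ 1, p ∤ n}. (This is the algebraic core of the theorem that the Grothendieck ring K_0^{𝔽_p}(S_∞) of projective modular representations of symmetric groups, identified via Brauer theory with the subring of ℤ[x_n] of virtual characters vanishing on p-singular elements, equals ℤ[y_n : p ∤ n].) -/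
open PowerSeries

lemma aux_coeffY_mem (p : ℕ) (X Y : PowerSeries (MvPolynomial ℕ+ ℚ))
    (hX : X = PowerSeries.mk fun n =>
      if h : 0 < n then MvPolynomial.X (⟨n, h⟩ : ℕ+) else 1)
    (hY : Y * pSingularPart p X = pRegularPart p X) (n : ℕ) :
    PowerSeries.coeff n Y ∈
      Algebra.adjoin ℤ (Set.range (MvPolynomial.X : ℕ+ → MvPolynomial ℕ+ ℚ)) := by
  set R := Algebra.adjoin ℤ (Set.range (MvPolynomial.X : ℕ+ → MvPolynomial ℕ+ ℚ)) with hR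
  have hXmem : ∀ k, PowerSeries.coeff k X ∈ R := by
    intro k; rw [hX]; erw [PowerSeries.coeff_mk]
    split
    · exact Algebra.subset_adjoin ⟨_, rfl⟩
    · exact one_mem R
  have hU : ∀ k, PowerSeries.coeff k (pSingularPart p X) ∈ R := by
    intro k; rw [pSingularPart, PowerSeries.coeff_mk]
    split
    · exact hXmem k
    · exact zero_mem R
  have hV : ∀ k, PowerSeries.coeff k (pRegularPart p X) ∈ R := by
    intro k; rw [pRegularPart, PowerSeries.coeff_mk]
    split
    · exact zero_mem R
    · exact hXmem k
  have hU0 : PowerSeries.coeff 0 (pSingularPart p X) = 1 := by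
    rw [pSingularPart, PowerSeries.coeff_mk, if_pos (dvd_zero p), hX]; erw [PowerSeries.coeff_mk]
    simp
    rfl
  induction n using Nat.strong_induction_on with
  | _ n ih =>
    have h := congrArg (PowerSeries.coeff n) hY
    rw [PowerSeries.coeff_mul] at h
    have hmem : ((n, 0) : ℕ × ℕ) ∈ Finset.HasAntidiagonal.antidiagonal n := by simp
    rw [← Finset.add_sum_erase _ _ hmem, hU0, mul_one] at h
    have hkey : PowerSeries.coeff n Y = PowerSeries.coeff n (pRegularPart p X)
        - ∑ x ∈ (Finset.HasAntidiagonal.antidiagonal n).erase (n, 0),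
            PowerSeries.coeff x.1 Y * PowerSeries.coeff x.2 (pSingularPart p X) := by
      rw [← h]; ring
    rw [hkey]
    refine sub_mem (hV n) (Subalgebra.sum_mem _ fun x hx => ?_)
    have hx1 : x.1 < n := by
      rcases Finset.mem_erase.mp hx with ⟨hne, hxd⟩
      have hsum : x.1 + x.2 = n := Finset.HasAntidiagonal.mem_antidiagonal.mp hxd
      rcases Nat.lt_or_ge x.1 n with h' | h'
      · exact h'
      · exact absurd (Prod.ext (by omega) (by omega : x.2 = 0)) hne
    exact mul_mem (ih x.1 hx1) (hU x.2)

/-- in `A = ℚ[x₁, x₂, …]` (variables indexed by `ℕ+`), let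
`X(t) = 1 + Σ_{n≥1} xₙ tⁿ`, let `U`,`V` be its `p`-singular/`p`-regular parts and
`Y = V·U⁻¹ = Σ yₙ tⁿ`.  Then `ℤ[xₙ : n ≥ 1] ∩ ℚ[yₙ : n ≥ 1, p ∤ n] = ℤ[yₙ : n ≥ 1, p ∤ n]`
as subsets of `A`. -/
theorem stmt6 (p : ℕ) (hp : p.Prime)
    (X Y : PowerSeries (MvPolynomial ℕ+ ℚ))
    (hX : X = PowerSeries.mk fun n =>
      if h : 0 < n then MvPolynomial.X (⟨n, h⟩ : ℕ+) else 1)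
    (hY : Y * pSingularPart p X = pRegularPart p X) :
    (Algebra.adjoin ℤ (Set.range (MvPolynomial.X : ℕ+ → MvPolynomial ℕ+ ℚ)) :
        Set (MvPolynomial ℕ+ ℚ)) ∩
      (Algebra.adjoin ℚ
        {a : MvPolynomial ℕ+ ℚ | ∃ n : ℕ, 1 ≤ n ∧ ¬ p ∣ n ∧
          a = PowerSeries.coeff n Y} : Set (MvPolynomial ℕ+ ℚ)) =
    (Algebra.adjoin ℤ
        {a : MvPolynomial ℕ+ ℚ | ∃ n : ℕ, 1 ≤ n ∧ ¬ p ∣ n ∧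
          a = PowerSeries.coeff n Y} : Set (MvPolynomial ℕ+ ℚ)) := by
  classical
  classical
  let π : MvPolynomial ℕ+ ℚ →ₐ[ℚ] MvPolynomial ℕ+ ℚ :=
    MvPolynomial.aeval fun n : ℕ+ => if p ∣ (n : ℕ) then 0 else MvPolynomial.X n
  have hπX : ∀ n : ℕ+, π (MvPolynomial.X n)
      = if p ∣ (n : ℕ) then 0 else MvPolynomial.X n := fun n => MvPolynomial.aeval_X _ n
  have hUmap : PowerSeries.map π.toRingHom (pSingularPart p X) = 1 := by
    apply PowerSeries.ext; intro k
    simp only [AlgHom.toRingHom_eq_coe, RingHom.coe_coe]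
    rw [PowerSeries.coeff_map, pSingularPart, PowerSeries.coeff_mk, PowerSeries.coeff_one]
    rcases eq_or_ne k 0 with rfl | hk
    · rw [if_pos (dvd_zero p), if_pos rfl, hX]; erw [PowerSeries.coeff_mk]
      simp
      exact map_one π
    · rw [if_neg hk]
      by_cases hpk : p ∣ k
      · rw [if_pos hpk, hX]; erw [PowerSeries.coeff_mk]; rw [dif_pos (Nat.pos_of_ne_zero hk)]
        exact (hπX ⟨k, Nat.pos_of_ne_zero hk⟩).trans (if_pos hpk)
      · rw [if_neg hpk, map_zero]
  have hYVmap : PowerSeries.map π.toRingHom Y = PowerSeries.map π.toRingHom (pRegularPart p X) := by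
    have h := congrArg (PowerSeries.map π.toRingHom) hY
    rwa [map_mul, hUmap, mul_one] at h
  have hπY : ∀ (n : ℕ) (hn : 0 < n), ¬ p ∣ n →
      π (PowerSeries.coeff n Y) = MvPolynomial.X (⟨n, hn⟩ : ℕ+) := by
    intro n hn hn2
    have h1 : π (PowerSeries.coeff n Y)
        = PowerSeries.coeff n (PowerSeries.map π.toRingHom Y) :=
      (PowerSeries.coeff_map _ _ _).symm
    rw [h1, hYVmap, PowerSeries.coeff_map]
    simp only [AlgHom.toRingHom_eq_coe, RingHom.coe_coe]
    rw [pRegularPart, PowerSeries.coeff_mk, if_neg hn2,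
      hX]; erw [PowerSeries.coeff_mk]; rw [dif_pos hn]
    exact (hπX ⟨n, hn⟩).trans (if_neg hn2)
  -- Step D: π maps the integral subalgebra to itself
  have hπR : ∀ b ∈ Algebra.adjoin ℤ (Set.range (MvPolynomial.X : ℕ+ → MvPolynomial ℕ+ ℚ)),
      π b ∈ Algebra.adjoin ℤ (Set.range (MvPolynomial.X : ℕ+ → MvPolynomial ℕ+ ℚ)) := by
    intro b hb
    induction hb using Algebra.adjoin_induction with
    | mem x hx =>
      rcases hx with ⟨n, rfl⟩
      rw [hπX]
      split
      · exact zero_mem _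
      · exact Algebra.subset_adjoin ⟨n, rfl⟩
    | algebraMap r =>
      simp only [algebraMap_int_eq, eq_intCast, map_intCast]
      exact intCast_mem _ r
    | add x y hx hy ihx ihy => rw [map_add]; exact add_mem ihx ihy
    | mul x y hx hy ihx ihy => rw [map_mul]; exact mul_mem ihx ihy
  -- the variable index set
  set I : Set ℕ+ := {n : ℕ+ | ¬ p ∣ (n : ℕ)} with hI
  set Sy : Set (MvPolynomial ℕ+ ℚ) := {a : MvPolynomial ℕ+ ℚ | ∃ n : ℕ, 1 ≤ n ∧ ¬ p ∣ n ∧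
      a = PowerSeries.coeff n Y} with hSy
  -- Step E: π maps the rational subalgebra into polynomials supported on I
  have hπQ : ∀ b ∈ Algebra.adjoin ℚ Sy,
      π b ∈ Algebra.adjoin ℚ (MvPolynomial.X '' I : Set (MvPolynomial ℕ+ ℚ)) := by
    intro b hb
    have h1 : π b ∈ (Algebra.adjoin ℚ Sy).map π := Subalgebra.mem_map.mpr ⟨b, hb, rfl⟩
    rw [AlgHom.map_adjoin] at h1
    refine Algebra.adjoin_mono ?_ h1
    rintro _ ⟨c, ⟨n, hn1, hn2, rfl⟩, rfl⟩
    rw [hπY n (by omega) hn2]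
    exact ⟨⟨n, by omega⟩, hn2, rfl⟩
  -- Step F: the integral-coefficients trick
  let φ : MvPolynomial ℕ+ ℤ →ₐ[ℤ] MvPolynomial ℕ+ ℚ :=
    (MvPolynomial.map (Int.castRingHom ℚ)).toIntAlgHom
  have hφapp : ∀ q, φ q = MvPolynomial.map (Int.castRingHom ℚ) q := fun q => rfl
  have hφX : ∀ n : ℕ+, φ (MvPolynomial.X n) = MvPolynomial.X n := fun n => by
    rw [hφapp, MvPolynomial.map_X]
  have hcomp : (⇑φ ∘ (MvPolynomial.X : ℕ+ → MvPolynomial ℕ+ ℤ)) = MvPolynomial.X :=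
    funext hφX
  have hrange : (AlgHom.range φ : Subalgebra ℤ (MvPolynomial ℕ+ ℚ)) =
      Algebra.adjoin ℤ (Set.range (MvPolynomial.X : ℕ+ → MvPolynomial ℕ+ ℚ)) := by
    rw [← Algebra.map_top, ← MvPolynomial.adjoin_range_X, AlgHom.map_adjoin,
      ← Set.range_comp, hcomp]
  have hstepF : ∀ b, b ∈ Algebra.adjoin ℤ (Set.range (MvPolynomial.X : ℕ+ → MvPolynomial ℕ+ ℚ)) →
      b ∈ Algebra.adjoin ℚ (MvPolynomial.X '' I : Set (MvPolynomial ℕ+ ℚ)) →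
      b ∈ Algebra.adjoin ℤ (MvPolynomial.X '' I : Set (MvPolynomial ℕ+ ℚ)) := by
    intro b hbZ hbI
    have hb' : b ∈ AlgHom.range φ := by rw [hrange]; exact hbZ
    obtain ⟨q, hq⟩ := hb'
    have hvars : (↑(MvPolynomial.vars q) : Set ℕ+) ⊆ I := by
      have h2 : b ∈ MvPolynomial.supported ℚ I := hbI
      rw [MvPolynomial.mem_supported] at h2
      have h3 : (MvPolynomial.map (Int.castRingHom ℚ) q).vars = q.vars :=
        MvPolynomial.vars_map_of_injective q Int.cast_injective
      rw [← hq, show φ.toRingHom q = MvPolynomial.map (Int.castRingHom ℚ) q from rfl, h3] at h2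
      exact h2
    have hqmem : q ∈ MvPolynomial.supported ℤ I := MvPolynomial.mem_supported.mpr hvars
    have hqmem' : q ∈ Algebra.adjoin ℤ (MvPolynomial.X '' I : Set (MvPolynomial ℕ+ ℤ)) := hqmem
    have himg : b ∈ (Algebra.adjoin ℤ (MvPolynomial.X '' I : Set (MvPolynomial ℕ+ ℤ))).map φ :=
      Subalgebra.mem_map.mpr ⟨q, hqmem', hq⟩
    rw [AlgHom.map_adjoin] at himg
    refine Algebra.adjoin_mono ?_ himg
    rintro _ ⟨c, ⟨i, hi, rfl⟩, rfl⟩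
    exact ⟨i, hi, (hφX i).symm⟩
  -- Step G: ψ ∘ π is the identity on the rational subalgebra
  let ψ : MvPolynomial ℕ+ ℚ →ₐ[ℚ] MvPolynomial ℕ+ ℚ :=
    MvPolynomial.aeval fun n : ℕ+ =>
      if p ∣ (n : ℕ) then 0 else PowerSeries.coeff (n : ℕ) Y
  have hψX : ∀ n : ℕ+, ψ (MvPolynomial.X n)
      = if p ∣ (n : ℕ) then 0 else PowerSeries.coeff (n : ℕ) Y :=
    fun n => MvPolynomial.aeval_X _ n
  have hG : ∀ b ∈ Algebra.adjoin ℚ Sy, ψ (π b) = b := by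
    intro b hb
    induction hb using Algebra.adjoin_induction with
    | mem x hx =>
      rcases hx with ⟨n, hn1, hn2, rfl⟩
      rw [hπY n (by omega) hn2]
      exact (hψX ⟨n, by omega⟩).trans (if_neg hn2)
    | algebraMap r => rw [AlgHom.commutes, AlgHom.commutes]
    | add x y hx hy ihx ihy => rw [map_add, map_add, ihx, ihy]
    | mul x y hx hy ihx ihy => rw [map_mul, map_mul, ihx, ihy]
  -- Step H: ψ maps adjoin ℤ (X '' I) into adjoin ℤ Sy
  have hH : ∀ b ∈ Algebra.adjoin ℤ (MvPolynomial.X '' I : Set (MvPolynomial ℕ+ ℚ)),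
      ψ b ∈ Algebra.adjoin ℤ Sy := by
    intro b hb
    induction hb using Algebra.adjoin_induction with
    | mem x hx =>
      rcases hx with ⟨i, hi, rfl⟩
      rw [hψX, if_neg hi]
      exact Algebra.subset_adjoin ⟨(i : ℕ), i.2, hi, rfl⟩
    | algebraMap r =>
      simp only [algebraMap_int_eq, eq_intCast, map_intCast]
      exact intCast_mem _ r
    | add x y hx hy ihx ihy => rw [map_add]; exact add_mem ihx ihy
    | mul x y hx hy ihx ihy => rw [map_mul]; exact mul_mem ihx ihy
  apply Set.eq_of_subset_of_subset
  · rintro a ⟨haR, haQ⟩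
    simp only [SetLike.mem_coe] at haR haQ ⊢
    have h1 := hπR a haR
    have h2 := hπQ a haQ
    have h3 := hstepF (π a) h1 h2
    have h4 := hH (π a) h3
    rwa [hG a haQ] at h4
  · intro a ha
    simp only [SetLike.mem_coe] at ha
    refine ⟨?_, ?_⟩
    · show a ∈ Algebra.adjoin ℤ (Set.range (MvPolynomial.X : ℕ+ → MvPolynomial ℕ+ ℚ))
      refine Algebra.adjoin_le ?_ ha
      rintro b ⟨n, hn1, hn2, rfl⟩
      exact aux_coeffY_mem p X Y hX hY n
    · show a ∈ Algebra.adjoin ℚ Sy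
      have hsub : Sy ⊆ ((Algebra.adjoin ℚ Sy).restrictScalars ℤ :
          Subalgebra ℤ (MvPolynomial ℕ+ ℚ)) := fun b hb =>
        (Subalgebra.mem_restrictScalars ℤ).mpr (Algebra.subset_adjoin hb)
      exact (Subalgebra.mem_restrictScalars ℤ).mp (Algebra.adjoin_le hsub ha)
end

section
/- Let p be a prime. In the polynomial ring A = ℚ[x_1, x_2, x_3, …] (a polynomial variable x_n for each integer n ≥ 1), form the power series X(t) = 1 + Σ_{n≥1} x_n t^n ∈ A[[t]], let U and V be its p-singular and p-regular parts, and set Y(t) = V(t)·U(t)^{-1} = Σ_{n≥0} y_n t^n. Then the family (y_n), indexed by the integers n ≥ 1 with p ∤ n, is algebraically independent over ℚ. (Together with the intersection statement ℤ[x] ∩ ℚ[y_n : p∤n] = ℤ[y_n : p∤n], this shows that K_0^{𝔽_p}(S_∞) is a polynomial ring with one generator in each degree prime to p.) -/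
open PowerSeries

/-- in `A = ℚ[x₁, x₂, …]` (variables indexed by `ℕ+`), with
`X(t) = 1 + Σ_{n≥1} xₙ tⁿ`, `U`,`V` its `p`-singular/`p`-regular parts and
`Y = V·U⁻¹ = Σ yₙ tⁿ`, the family `(yₙ)` indexed by the `n ≥ 1` with `p ∤ n` is
algebraically independent over `ℚ`. -/
theorem stmt7 (p : ℕ) (hp : p.Prime)
    (X Y : PowerSeries (MvPolynomial ℕ+ ℚ))
    (hX : X = PowerSeries.mk fun n =>
      if h : 0 < n then MvPolynomial.X (⟨n, h⟩ : ℕ+) else 1)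
    (hY : Y * pSingularPart p X = pRegularPart p X) :
    AlgebraicIndependent ℚ
      (fun i : {n : ℕ // 1 ≤ n ∧ ¬ p ∣ n} =>
        PowerSeries.coeff (i : ℕ) Y) := by
  subst hX
  -- the specialization killing all variables x_m with p ∣ m
  set σ : MvPolynomial ℕ+ ℚ →ₐ[ℚ] MvPolynomial ℕ+ ℚ :=
    MvPolynomial.aeval (fun m : ℕ+ => if p ∣ (m : ℕ) then 0 else MvPolynomial.X m) with hσ
  set F : PowerSeries (MvPolynomial ℕ+ ℚ) :=
    PowerSeries.mk fun n => if h : 0 < n then MvPolynomial.X (⟨n, h⟩ : ℕ+) else 1 with hF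
  -- the singular part maps to 1
  have hσU : PowerSeries.map (σ : MvPolynomial ℕ+ ℚ →+* MvPolynomial ℕ+ ℚ)
      (pSingularPart p F) = 1 := by
    ext n
    simp only [PowerSeries.coeff_map, pSingularPart, PowerSeries.coeff_mk,
      PowerSeries.coeff_one, hF]
    rcases Nat.eq_zero_or_pos n with rfl | hn
    · simp
    · rw [if_neg hn.ne']
      split_ifs with h
      · exact congrArg _ ((MvPolynomial.aeval_X _ _).trans (if_pos h))
      · simp
  have hmul : PowerSeries.map (σ : MvPolynomial ℕ+ ℚ →+* MvPolynomial ℕ+ ℚ) Y *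
      PowerSeries.map (σ : MvPolynomial ℕ+ ℚ →+* MvPolynomial ℕ+ ℚ) (pSingularPart p F)
      = PowerSeries.map (σ : MvPolynomial ℕ+ ℚ →+* MvPolynomial ℕ+ ℚ) (pRegularPart p F) := by
    rw [← map_mul]
    exact congrArg _ hY
  rw [hσU, mul_one] at hmul
  -- key computation: σ (yₙ) = xₙ for the relevant n
  have key : ∀ i : {n : ℕ // 1 ≤ n ∧ ¬ p ∣ n},
      σ (PowerSeries.coeff (i : ℕ) Y)
        = MvPolynomial.X (⟨(i : ℕ), i.2.1⟩ : ℕ+) := by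
    rintro ⟨n, hn1, hnp⟩
    have h := congrArg (PowerSeries.coeff n) hmul
    rw [PowerSeries.coeff_map, PowerSeries.coeff_map] at h
    simp only [pRegularPart, PowerSeries.coeff_mk, if_neg hnp, hF] at h
    rw [dif_pos (show 0 < n from hn1), RingHom.coe_coe] at h
    rw [h]
    exact (MvPolynomial.aeval_X _ _).trans (if_neg hnp)
  have hind : AlgebraicIndependent ℚ
      (fun i : {n : ℕ // 1 ≤ n ∧ ¬ p ∣ n} =>
        MvPolynomial.X (R := ℚ) (⟨(i : ℕ), i.2.1⟩ : ℕ+)) :=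
    (MvPolynomial.algebraicIndependent_X ℕ+ ℚ).comp
      (fun i : {n : ℕ // 1 ≤ n ∧ ¬ p ∣ n} => (⟨(i : ℕ), i.2.1⟩ : ℕ+))
      (fun a b hab => Subtype.ext (by simpa using congrArg (fun m : ℕ+ => (m : ℕ)) hab))
  refine AlgebraicIndependent.of_comp σ ?_
  have heq : (σ ∘ fun i : {n : ℕ // 1 ≤ n ∧ ¬ p ∣ n} =>
      PowerSeries.coeff (i : ℕ) Y)
      = fun i : {n : ℕ // 1 ≤ n ∧ ¬ p ∣ n} =>
        MvPolynomial.X (R := ℚ) (⟨(i : ℕ), i.2.1⟩ : ℕ+) := funext key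
  rw [heq]
  exact hind
end

section
/- Let p be a prime, let N ≥ M ≥ 1 be integers, and let Φ = (φ_{j,k}) ∈ GL_N(ℤ). Let A = ℚ[x_{j,i} : j ∈ {1,…,N}, i ≥ 1] and, in A[[t]], put F_j(t) = 1 + Σ_{i≥1} x_{j,i} t^i for each j (invertible since its constant term is 1). For each k ∈ {1,…,M} set X_k(t) = ∏_{j=1}^N F_j(t)^{φ_{j,k}} (integer, possibly negative, exponents), let U_k and V_k be the p-singular and p-regular parts of X_k, and set Y_k(t) = V_k(t)·U_k(t)^{-1} = Σ_{n≥0} y_{k,n} t^n. Then the intersection (inside A) of the ℤ-subalgebra generated by all the variables {x_{j,i} : j ∈ {1,…,N}, i ≥ 1} with the ℚ-subalgebra generated by {y_{k,n} : 1 ≤ k ≤ M, n ≥ 1, p ∤ n} equals the ℤ-subalgebra generated by {y_{k,n} : 1 ≤ k ≤ M, n ≥ 1, p ∤ n}. (This is the algebraic core of the theorem that, for a finite group G with splitting field k of characteristic p, the Grothendieck ring K_0^k(G≀S_∞) of projective modular representations of wreath products G≀S_n is the polynomial ring ℤ[y_{k,n} : 1 ≤ k ≤ M, p ∤ n].) 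-/
open PowerSeries

namespace Stmt10Aux
open MvPolynomial PowerSeries
variable {σ : Type*}


open MvPolynomial

variable {σ : Type*}

/-- All monomials of `f` have degree ≥ `d`. -/
def Dge (d : ℕ) (f : MvPolynomial σ ℚ) : Prop :=
  ∀ γ : σ →₀ ℕ, γ.degree < d → MvPolynomial.coeff γ f = 0

theorem Dge.mono {a b : ℕ} (h : a ≤ b) {f : MvPolynomial σ ℚ} (hf : Dge b f) : Dge a f :=
  fun γ hγ => hf γ (lt_of_lt_of_le hγ h)

theorem Dge_zero (d : ℕ) : Dge d (0 : MvPolynomial σ ℚ) := fun γ _ => MvPolynomial.coeff_zero γ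

theorem Dge.add {d : ℕ} {f g : MvPolynomial σ ℚ} (hf : Dge d f) (hg : Dge d g) :
    Dge d (f + g) := fun γ hγ => by rw [MvPolynomial.coeff_add, hf γ hγ, hg γ hγ, add_zero]

theorem Dge.neg {d : ℕ} {f : MvPolynomial σ ℚ} (hf : Dge d f) : Dge d (-f) :=
  fun γ hγ => by rw [MvPolynomial.coeff_neg, hf γ hγ, neg_zero]

theorem Dge.sub {d : ℕ} {f g : MvPolynomial σ ℚ} (hf : Dge d f) (hg : Dge d g) :
    Dge d (f - g) := by rw [sub_eq_add_neg]; exact hf.add hg.neg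

theorem Dge.smul {d : ℕ} {c : ℚ} {f : MvPolynomial σ ℚ} (hf : Dge d f) : Dge d (c • f) :=
  fun γ hγ => by rw [MvPolynomial.coeff_smul, hf γ hγ, smul_zero]

theorem Dge.sum {d : ℕ} {ι : Type*} (s : Finset ι) (f : ι → MvPolynomial σ ℚ)
    (h : ∀ i ∈ s, Dge d (f i)) : Dge d (∑ i ∈ s, f i) := by
  classical
  induction s using Finset.cons_induction with
  | empty => simpa using Dge_zero d
  | cons i s his ih =>
      rw [Finset.sum_cons]
      exact (h i (Finset.mem_cons_self i s)).add
        (ih fun j hj => h j (Finset.mem_cons_of_mem hj))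

theorem Dge.mul {a b : ℕ} {f g : MvPolynomial σ ℚ} (hf : Dge a f) (hg : Dge b g) :
    Dge (a + b) (f * g) := by
  classical
  intro γ hγ
  rw [MvPolynomial.coeff_mul]
  refine Finset.sum_eq_zero fun x hx => ?_
  rw [Finset.HasAntidiagonal.mem_antidiagonal] at hx
  have hdeg : x.1.degree + x.2.degree = γ.degree := by
    rw [← hx]; simp [Finsupp.degree_eq_weight_one]
  rcases lt_or_ge x.1.degree a with h1 | h1
  · rw [hf x.1 h1, zero_mul]
  · have : x.2.degree < b := by omega
    rw [hg x.2 this, mul_zero]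

theorem Dge.mul_right {a : ℕ} {f g : MvPolynomial σ ℚ} (hf : Dge a f) : Dge a (f * g) := by
  have hg : Dge 0 g := fun γ h => absurd h (Nat.not_lt_zero _)
  simpa using hf.mul hg

theorem Dge_X (v : σ) : Dge 1 (X v : MvPolynomial σ ℚ) := by
  classical
  intro γ hγ
  have hγ0 : γ = 0 := by
    rwa [Nat.lt_one_iff, Finsupp.degree_eq_zero_iff] at hγ
  subst hγ0
  rw [MvPolynomial.coeff_X']
  rw [if_neg]
  intro h
  have := DFunLike.congr_fun h v
  simp at this

theorem Dge.pow {f : MvPolynomial σ ℚ} (hf : Dge 1 f) (m : ℕ) : Dge m (f ^ m) := by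
  induction m with
  | zero => intro γ h; omega
  | succ m ih => rw [pow_succ]; exact ih.mul hf

theorem Dge.homogeneousComponent_eq_zero {d e : ℕ} {f : MvPolynomial σ ℚ} (hf : Dge d f)
    (he : e < d) : homogeneousComponent e f = 0 := by
  ext γ
  rw [MvPolynomial.coeff_homogeneousComponent, MvPolynomial.coeff_zero]
  split_ifs with h
  · exact hf γ (h ▸ he)
  · rfl

/-- telescoping: powers -/
theorem Dge.pow_sub_pow {f g : MvPolynomial σ ℚ} (hf : Dge 1 f) (hg : Dge 1 g)
    (hfg : Dge 2 (f - g)) (m : ℕ) : Dge (m + 1) (f ^ m - g ^ m) := by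
  induction m with
  | zero => simpa using Dge_zero 1
  | succ m ih =>
      have key : f ^ (m + 1) - g ^ (m + 1) = f ^ m * (f - g) + (f ^ m - g ^ m) * g := by
        ring
      rw [key]
      have h1 : Dge (m + 2) (f ^ m * (f - g)) := (hf.pow m).mul hfg
      have h2 : Dge (m + 2) ((f ^ m - g ^ m) * g) := by
        have := ih.mul hg
        simpa [Nat.add_comm, Nat.add_assoc, Nat.add_left_comm] using this
      simpa [Nat.add_comm, Nat.add_assoc, Nat.add_left_comm] using h1.add h2

theorem Dge.prod {ι : Type*} (s : Finset ι) (f : ι → MvPolynomial σ ℚ) (e : ι → ℕ)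
    (hf : ∀ i ∈ s, Dge 1 (f i)) : Dge (∑ i ∈ s, e i) (∏ i ∈ s, f i ^ e i) := by
  classical
  induction s using Finset.cons_induction with
  | empty => intro γ h; simp at h
  | cons i s his ih =>
      rw [Finset.sum_cons, Finset.prod_cons]
      exact ((hf i (Finset.mem_cons_self i s)).pow (e i)).mul
        (ih fun j hj => hf j (Finset.mem_cons_of_mem hj))

/-- telescoping: products -/
theorem Dge.prod_sub_prod {ι : Type*} (s : Finset ι) (f g : ι → MvPolynomial σ ℚ) (e : ι → ℕ)
    (hf : ∀ i ∈ s, Dge 1 (f i)) (hg : ∀ i ∈ s, Dge 1 (g i))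
    (hfg : ∀ i ∈ s, Dge 2 (f i - g i)) :
    Dge ((∑ i ∈ s, e i) + 1) ((∏ i ∈ s, f i ^ e i) - ∏ i ∈ s, g i ^ e i) := by
  classical
  induction s using Finset.cons_induction with
  | empty => simpa using Dge_zero 1
  | cons i s his ih =>
      rw [Finset.sum_cons, Finset.prod_cons, Finset.prod_cons]
      have key : f i ^ e i * ∏ j ∈ s, f j ^ e j - g i ^ e i * ∏ j ∈ s, g j ^ e j
          = f i ^ e i * ((∏ j ∈ s, f j ^ e j) - ∏ j ∈ s, g j ^ e j)
            + (f i ^ e i - g i ^ e i) * ∏ j ∈ s, g j ^ e j := by ring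
      rw [key]
      have h1 : Dge (e i + ((∑ j ∈ s, e j) + 1)) _ :=
        ((hf i (Finset.mem_cons_self i s)).pow (e i)).mul
          (ih (fun j hj => hf j (Finset.mem_cons_of_mem hj))
            (fun j hj => hg j (Finset.mem_cons_of_mem hj))
            (fun j hj => hfg j (Finset.mem_cons_of_mem hj)))
      have h2 : Dge ((e i + 1) + ∑ j ∈ s, e j) _ :=
        (Dge.pow_sub_pow (hf i (Finset.mem_cons_self i s)) (hg i (Finset.mem_cons_self i s))
          (hfg i (Finset.mem_cons_self i s)) (e i)).mul
          (Dge.prod s g e fun j hj => hg j (Finset.mem_cons_of_mem hj))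
      have := (h1.mono (a := e i + (∑ j ∈ s, e j) + 1) (by omega)).add
        (h2.mono (a := e i + (∑ j ∈ s, e j) + 1) (by omega))
      exact this


section Good

variable {N : ℕ}

local notation "R" => MvPolynomial (Fin N × ℕ+) ℚ

noncomputable def Lc (c : Fin N → ℤ) (n : ℕ+) : R :=
  ∑ j : Fin N, (c j : ℚ) • MvPolynomial.X (j, n)

noncomputable def Asub (N : ℕ) (n : ℕ) : Subalgebra ℤ (MvPolynomial (Fin N × ℕ+) ℚ) :=
  Algebra.adjoin ℤ (MvPolynomial.X '' {w : Fin N × ℕ+ | (w.2 : ℕ) ≤ n})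

noncomputable def Bsub (N : ℕ) (n : ℕ) : Subalgebra ℤ (MvPolynomial (Fin N × ℕ+) ℚ) :=
  Algebra.adjoin ℤ (MvPolynomial.X '' {w : Fin N × ℕ+ | (w.2 : ℕ) < n})

theorem Bsub_le_Asub (n : ℕ) : Bsub N n ≤ Asub N n :=
  Algebra.adjoin_mono (Set.image_mono fun w hw => Set.mem_setOf.mpr (le_of_lt hw))

theorem Asub_le_Bsub {m n : ℕ} (h : m < n) : Asub N m ≤ Bsub N n :=
  Algebra.adjoin_mono (Set.image_mono fun w hw => lt_of_le_of_lt hw h)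

theorem Asub_mono {m n : ℕ} (h : m ≤ n) : Asub N m ≤ Asub N n :=
  Algebra.adjoin_mono (Set.image_mono fun w hw => le_trans hw h)

theorem Bsub_mono {m n : ℕ} (h : m ≤ n) : Bsub N m ≤ Bsub N n :=
  Algebra.adjoin_mono (Set.image_mono fun w hw => lt_of_lt_of_le hw h)

theorem Asub_le_adjoin_range (n : ℕ) :
    Asub N n ≤ Algebra.adjoin ℤ (Set.range (MvPolynomial.X : Fin N × ℕ+ → R)) :=
  Algebra.adjoin_mono (by rintro _ ⟨w, _, rfl⟩; exact ⟨w, rfl⟩)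

theorem X_mem_Asub {w : Fin N × ℕ+} {n : ℕ} (h : (w.2 : ℕ) ≤ n) : MvPolynomial.X w ∈ Asub N n :=
  Algebra.subset_adjoin ⟨w, h, rfl⟩

theorem smul_mem_int {S : Subalgebra ℤ R} {c : ℤ} {x : R} (hx : x ∈ S) : (c : ℚ) • x ∈ S := by
  rw [Int.cast_smul_eq_zsmul]
  exact zsmul_mem hx c

theorem Lc_mem_Asub (c : Fin N → ℤ) (n : ℕ+) : Lc c n ∈ Asub N (n : ℕ) :=
  Subalgebra.sum_mem _ fun j _ => smul_mem_int (X_mem_Asub le_rfl)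


theorem Dge_Lc (c : Fin N → ℤ) (n : ℕ+) : Dge 1 (Lc c n) :=
  Dge.sum _ _ fun j _ => (Dge_X (j, n)).smul

theorem coeff_mul_split (f g : PowerSeries R) (n : ℕ) (hn : 0 < n) :
    PowerSeries.coeff n (f * g) =
      PowerSeries.constantCoeff f * PowerSeries.coeff n g
      + PowerSeries.coeff n f * PowerSeries.constantCoeff g
      + ∑ q ∈ (Finset.HasAntidiagonal.antidiagonal n).filter (fun q => q.1 ≠ 0 ∧ q.2 ≠ 0),
          PowerSeries.coeff q.1 f * PowerSeries.coeff q.2 g := by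
  rw [PowerSeries.coeff_mul,
    ← Finset.sum_filter_add_sum_filter_not (Finset.HasAntidiagonal.antidiagonal n) (fun q => q.1 ≠ 0 ∧ q.2 ≠ 0)]
  have hset : (Finset.HasAntidiagonal.antidiagonal n).filter (fun q => ¬(q.1 ≠ 0 ∧ q.2 ≠ 0))
      = {(0, n), (n, 0)} := by
    ext ⟨a, b⟩
    simp only [Finset.mem_filter, Finset.HasAntidiagonal.mem_antidiagonal, Finset.mem_insert,
      Finset.mem_singleton, Prod.mk.injEq, ne_eq, not_and, not_not]
    constructor
    · rintro ⟨hab, h⟩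
      by_cases ha : a = 0
      · left; exact ⟨ha, by omega⟩
      · right; have := h ha; omega
    · rintro (⟨rfl, rfl⟩ | ⟨rfl, rfl⟩) <;> simp
  have hne : ((0 : ℕ), n) ≠ (n, (0 : ℕ)) := by
    intro h; rw [Prod.mk.injEq] at h; omega
  rw [hset, Finset.sum_insert (by simpa using hne), Finset.sum_singleton]
  simp only [← PowerSeries.coeff_zero_eq_constantCoeff_apply]
  ring

/-- The key structure: constant coefficient 1, and each higher coefficient equals the
linear form `Lc c n` up to an error with no monomials of degree `< 2` that moreover only
involves variables of lower level. -/
structure Good (f : PowerSeries R) (c : Fin N → ℤ) : Prop where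
  const : PowerSeries.constantCoeff f = 1
  diffD : ∀ n : ℕ+, Dge 2 (PowerSeries.coeff (n : ℕ) f - Lc c n)
  diffB : ∀ n : ℕ+, PowerSeries.coeff (n : ℕ) f - Lc c n ∈ Bsub N (n : ℕ)

theorem Good.coeffD1 {f : PowerSeries R} {c : Fin N → ℤ} (hf : Good f c) (n : ℕ) (hn : 0 < n) :
    Dge 1 (PowerSeries.coeff n f) := by
  have : PowerSeries.coeff n f
      = (PowerSeries.coeff ((⟨n, hn⟩ : ℕ+) : ℕ) f - Lc c ⟨n, hn⟩) + Lc c ⟨n, hn⟩ := by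
    simp
  rw [this]
  exact ((hf.diffD ⟨n, hn⟩).mono (by omega)).add (Dge_Lc c _)

theorem Good.coeffA {f : PowerSeries R} {c : Fin N → ℤ} (hf : Good f c) (n : ℕ) :
    PowerSeries.coeff n f ∈ Asub N n := by
  rcases Nat.eq_zero_or_pos n with rfl | hn
  · rw [PowerSeries.coeff_zero_eq_constantCoeff_apply, hf.const]; exact one_mem _
  · have : PowerSeries.coeff n f
        = (PowerSeries.coeff ((⟨n, hn⟩ : ℕ+) : ℕ) f - Lc c ⟨n, hn⟩) + Lc c ⟨n, hn⟩ := by simp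
    rw [this]
    exact add_mem (Bsub_le_Asub n (hf.diffB ⟨n, hn⟩)) (Lc_mem_Asub c ⟨n, hn⟩)

theorem Lc_add (c d : Fin N → ℤ) (n : ℕ+) : Lc (c + d) n = Lc c n + Lc d n := by
  rw [Lc, Lc, Lc, ← Finset.sum_add_distrib]
  refine Finset.sum_congr rfl fun j _ => ?_
  rw [Pi.add_apply, Int.cast_add, add_smul]

theorem Lc_neg (c : Fin N → ℤ) (n : ℕ+) : Lc (-c) n = -(Lc c n) := by
  rw [Lc, Lc, ← Finset.sum_neg_distrib]
  refine Finset.sum_congr rfl fun j _ => ?_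
  rw [Pi.neg_apply, Int.cast_neg, neg_smul]

theorem Lc_zero (n : ℕ+) : Lc (0 : Fin N → ℤ) n = 0 := by
  simp [Lc]

theorem good_one : Good (1 : PowerSeries R) 0 where
  const := map_one _
  diffD := fun n => by
    rw [PowerSeries.coeff_one, if_neg (by exact_mod_cast n.pos.ne'), Lc_zero, sub_zero]
    exact Dge_zero 2
  diffB := fun n => by
    rw [PowerSeries.coeff_one, if_neg (by exact_mod_cast n.pos.ne'), Lc_zero, sub_zero]
    exact zero_mem _

theorem Good.mul {f g : PowerSeries R} {c d : Fin N → ℤ} (hf : Good f c) (hg : Good g d) :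
    Good (f * g) (c + d) := by
  have mid : ∀ n : ℕ+, ∀ q ∈ (Finset.HasAntidiagonal.antidiagonal (n : ℕ)).filter (fun q => q.1 ≠ 0 ∧ q.2 ≠ 0),
      Dge 2 (PowerSeries.coeff q.1 f * PowerSeries.coeff q.2 g) ∧
      PowerSeries.coeff q.1 f * PowerSeries.coeff q.2 g ∈ Bsub N (n : ℕ) := by
    intro n q hq
    rw [Finset.mem_filter, Finset.HasAntidiagonal.mem_antidiagonal] at hq
    obtain ⟨hsum, h1, h2⟩ := hq
    have hq1 : q.1 < (n : ℕ) := by omega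
    have hq2 : q.2 < (n : ℕ) := by omega
    constructor
    · have := (hf.coeffD1 q.1 (by omega)).mul (hg.coeffD1 q.2 (by omega))
      simpa using this
    · exact mul_mem (Asub_le_Bsub hq1 (hf.coeffA q.1)) (Asub_le_Bsub hq2 (hg.coeffA q.2))
  refine ⟨by rw [map_mul, hf.const, hg.const, one_mul], fun n => ?_, fun n => ?_⟩
  · rw [coeff_mul_split f g n n.pos, hf.const, hg.const, one_mul, mul_one, Lc_add]
    have key : PowerSeries.coeff (n : ℕ) g + PowerSeries.coeff (n : ℕ) f
        + (∑ q ∈ (Finset.HasAntidiagonal.antidiagonal (n : ℕ)).filter (fun q => q.1 ≠ 0 ∧ q.2 ≠ 0),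
          PowerSeries.coeff q.1 f * PowerSeries.coeff q.2 g) - (Lc c n + Lc d n)
        = (PowerSeries.coeff (n : ℕ) f - Lc c n) + (PowerSeries.coeff (n : ℕ) g - Lc d n)
          + ∑ q ∈ (Finset.HasAntidiagonal.antidiagonal (n : ℕ)).filter (fun q => q.1 ≠ 0 ∧ q.2 ≠ 0),
            PowerSeries.coeff q.1 f * PowerSeries.coeff q.2 g := by ring
    rw [key]
    exact ((hf.diffD n).add (hg.diffD n)).add (Dge.sum _ _ fun q hq => (mid n q hq).1)
  · rw [coeff_mul_split f g n n.pos, hf.const, hg.const, one_mul, mul_one, Lc_add]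
    have key : PowerSeries.coeff (n : ℕ) g + PowerSeries.coeff (n : ℕ) f
        + (∑ q ∈ (Finset.HasAntidiagonal.antidiagonal (n : ℕ)).filter (fun q => q.1 ≠ 0 ∧ q.2 ≠ 0),
          PowerSeries.coeff q.1 f * PowerSeries.coeff q.2 g) - (Lc c n + Lc d n)
        = (PowerSeries.coeff (n : ℕ) f - Lc c n) + (PowerSeries.coeff (n : ℕ) g - Lc d n)
          + ∑ q ∈ (Finset.HasAntidiagonal.antidiagonal (n : ℕ)).filter (fun q => q.1 ≠ 0 ∧ q.2 ≠ 0),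
            PowerSeries.coeff q.1 f * PowerSeries.coeff q.2 g := by ring
    rw [key]
    exact add_mem (add_mem (hf.diffB n) (hg.diffB n))
      (Subalgebra.sum_mem _ fun q hq => (mid n q hq).2)


theorem Good.inv {f g : PowerSeries R} {c : Fin N → ℤ} (hf : Good f c) (hfg : f * g = 1) :
    Good g (-c) := by
  have hg0 : PowerSeries.constantCoeff g = 1 := by
    have := congrArg (PowerSeries.constantCoeff) hfg
    rw [map_mul, hf.const, one_mul, map_one] at this; exact this
  have key : ∀ n : ℕ, 0 < n → PowerSeries.coeff n g
      = -(PowerSeries.coeff n f)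
        - ∑ q ∈ (Finset.HasAntidiagonal.antidiagonal n).filter (fun q => q.1 ≠ 0 ∧ q.2 ≠ 0),
          PowerSeries.coeff q.1 f * PowerSeries.coeff q.2 g := by
    intro n hn
    have hc : PowerSeries.coeff n (f * g) = 0 := by
      rw [hfg, PowerSeries.coeff_one, if_neg hn.ne']
    rw [coeff_mul_split f g n hn, hf.const, one_mul, hg0, mul_one] at hc
    linear_combination hc
  have gmem : ∀ n : ℕ, 0 < n →
      Dge 1 (PowerSeries.coeff n g) ∧ PowerSeries.coeff n g ∈ Asub N n := by
    intro n
    induction n using Nat.strong_induction_on with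
    | _ n ih =>
      intro hn
      rw [key n hn]
      constructor
      · refine ((hf.coeffD1 n hn).neg).sub (Dge.sum _ _ fun q hq => ?_)
        rw [Finset.mem_filter, Finset.HasAntidiagonal.mem_antidiagonal] at hq
        exact (hf.coeffD1 q.1 (by omega)).mul_right
      · refine sub_mem (neg_mem (hf.coeffA n)) (Subalgebra.sum_mem _ fun q hq => ?_)
        rw [Finset.mem_filter, Finset.HasAntidiagonal.mem_antidiagonal] at hq
        exact mul_mem (Asub_mono (show q.1 ≤ n by omega) (hf.coeffA q.1))
          (Asub_mono (show q.2 ≤ n by omega) ((ih q.2 (by omega) (by omega)).2))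
  have mid : ∀ n : ℕ+, ∀ q ∈ (Finset.HasAntidiagonal.antidiagonal (n : ℕ)).filter (fun q => q.1 ≠ 0 ∧ q.2 ≠ 0),
      Dge 2 (PowerSeries.coeff q.1 f * PowerSeries.coeff q.2 g) ∧
      PowerSeries.coeff q.1 f * PowerSeries.coeff q.2 g ∈ Bsub N (n : ℕ) := by
    intro n q hq
    rw [Finset.mem_filter, Finset.HasAntidiagonal.mem_antidiagonal] at hq
    obtain ⟨hsum, h1, h2⟩ := hq
    constructor
    · have := (hf.coeffD1 q.1 (by omega)).mul ((gmem q.2 (by omega)).1)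
      simpa using this
    · exact mul_mem (Asub_le_Bsub (show q.1 < (n : ℕ) by omega) (hf.coeffA q.1))
        (Asub_le_Bsub (show q.2 < (n : ℕ) by omega) ((gmem q.2 (by omega)).2))
  refine ⟨hg0, fun n => ?_, fun n => ?_⟩
  · rw [Lc_neg, sub_neg_eq_add]
    have key2 : PowerSeries.coeff (n : ℕ) g + Lc c n
        = -(PowerSeries.coeff (n : ℕ) f - Lc c n)
          - ∑ q ∈ (Finset.HasAntidiagonal.antidiagonal (n : ℕ)).filter (fun q => q.1 ≠ 0 ∧ q.2 ≠ 0),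
            PowerSeries.coeff q.1 f * PowerSeries.coeff q.2 g := by
      linear_combination key (n : ℕ) n.pos
    rw [key2]
    exact ((hf.diffD n).neg).sub (Dge.sum _ _ fun q hq => (mid n q hq).1)
  · rw [Lc_neg, sub_neg_eq_add]
    have key2 : PowerSeries.coeff (n : ℕ) g + Lc c n
        = -(PowerSeries.coeff (n : ℕ) f - Lc c n)
          - ∑ q ∈ (Finset.HasAntidiagonal.antidiagonal (n : ℕ)).filter (fun q => q.1 ≠ 0 ∧ q.2 ≠ 0),
            PowerSeries.coeff q.1 f * PowerSeries.coeff q.2 g := by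
      linear_combination key (n : ℕ) n.pos
    rw [key2]
    exact sub_mem (neg_mem (hf.diffB n)) (Subalgebra.sum_mem _ fun q hq => (mid n q hq).2)

theorem Good.pow {f : PowerSeries R} {c : Fin N → ℤ} (hf : Good f c) (m : ℕ) :
    Good (f ^ m) (m • c) := by
  induction m with
  | zero => rw [pow_zero, zero_smul]; exact good_one
  | succ m ih => rw [pow_succ, succ_nsmul]; exact ih.mul hf

theorem good_zpow {u : (PowerSeries R)ˣ} {c : Fin N → ℤ} (hu : Good (u : PowerSeries R) c)
    (m : ℤ) : Good ((u ^ m : (PowerSeries R)ˣ) : PowerSeries R) (m • c) := by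
  rcases m with m | m
  · rw [Int.ofNat_eq_coe, zpow_natCast, Units.val_pow_eq_pow_val, natCast_zsmul]
    exact hu.pow m
  · rw [zpow_negSucc, negSucc_zsmul]
    refine Good.inv ?_ (Units.mul_inv _)
    rw [Units.val_pow_eq_pow_val]
    exact hu.pow (m + 1)

theorem good_prod (s : Finset (Fin N)) (f : Fin N → PowerSeries R) (c : Fin N → Fin N → ℤ)
    (h : ∀ j ∈ s, Good (f j) (c j)) : Good (∏ j ∈ s, f j) (∑ j ∈ s, c j) := by
  classical
  induction s using Finset.cons_induction with
  | empty => rw [Finset.prod_empty, Finset.sum_empty]; exact good_one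
  | cons i s his ih =>
      rw [Finset.prod_cons, Finset.sum_cons]
      exact (h i (Finset.mem_cons_self i s)).mul (ih fun j hj => h j (Finset.mem_cons_of_mem hj))

theorem good_F (j : Fin N) (f : PowerSeries R)
    (hf : f = PowerSeries.mk fun i => if h : 0 < i then MvPolynomial.X (j, ⟨i, h⟩) else 1) :
    Good f (Pi.single j 1) := by
  have hcoeff : ∀ n : ℕ+, PowerSeries.coeff (n : ℕ) f = MvPolynomial.X (j, n) := by
    intro n
    rw [hf, PowerSeries.coeff_mk, dif_pos n.pos]
    congr
  have hLc : ∀ n : ℕ+, Lc (Pi.single j (1 : ℤ)) n = MvPolynomial.X (j, n) := by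
    intro n
    rw [Lc, Finset.sum_eq_single j]
    · simp
    · intro b _ hb
      rw [Pi.single_eq_of_ne hb]
      simp
    · intro h; exact absurd (Finset.mem_univ j) h
  refine ⟨?_, fun n => ?_, fun n => ?_⟩
  · rw [hf]
    rw [← PowerSeries.coeff_zero_eq_constantCoeff_apply, PowerSeries.coeff_mk]
    simp
  · rw [hcoeff n, hLc n, sub_self]; exact Dge_zero 2
  · rw [hcoeff n, hLc n, sub_self]; exact zero_mem _


theorem good_Y (p : ℕ) {XX Yk : PowerSeries R} {c : Fin N → ℤ} (hXX : Good XX c)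
    (hYU : Yk * pSingularPart p XX = pRegularPart p XX) :
    (∀ n : ℕ, Dge 1 (PowerSeries.coeff n Yk) ∧ PowerSeries.coeff n Yk ∈ Asub N n) ∧
    (∀ n : ℕ+, ¬ p ∣ (n : ℕ) →
      Dge 2 (PowerSeries.coeff (n : ℕ) Yk - Lc c n) ∧
      PowerSeries.coeff (n : ℕ) Yk - Lc c n ∈ Bsub N (n : ℕ)) := by
  set U := pSingularPart p XX with hU
  set V := pRegularPart p XX with hV
  have hUc : ∀ m : ℕ, PowerSeries.coeff m U
      = if p ∣ m then PowerSeries.coeff m XX else 0 := fun m => by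
    rw [hU, pSingularPart, PowerSeries.coeff_mk]
  have hVc : ∀ m : ℕ, PowerSeries.coeff m V
      = if p ∣ m then 0 else PowerSeries.coeff m XX := fun m => by
    rw [hV, pRegularPart, PowerSeries.coeff_mk]
  have hU0 : PowerSeries.constantCoeff U = 1 := by
    rw [← PowerSeries.coeff_zero_eq_constantCoeff_apply, hUc 0, if_pos (dvd_zero p),
      PowerSeries.coeff_zero_eq_constantCoeff_apply, hXX.const]
  have hY0 : PowerSeries.coeff 0 Yk = 0 := by
    have := congrArg (PowerSeries.constantCoeff) hYU
    rw [map_mul, hU0, mul_one] at this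
    rw [PowerSeries.coeff_zero_eq_constantCoeff_apply, this,
      ← PowerSeries.coeff_zero_eq_constantCoeff_apply, hVc 0, if_pos (dvd_zero p)]
  have DU1 : ∀ m : ℕ, 0 < m → Dge 1 (PowerSeries.coeff m U) := by
    intro m hm; rw [hUc m]; split_ifs
    · exact hXX.coeffD1 m hm
    · exact Dge_zero 1
  have memU : ∀ m : ℕ, PowerSeries.coeff m U ∈ Asub N m := by
    intro m; rw [hUc m]; split_ifs
    · exact hXX.coeffA m
    · exact zero_mem _
  have keyn : ∀ n : ℕ, 0 < n → PowerSeries.coeff n Yk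
      = PowerSeries.coeff n V
        - ∑ q ∈ (Finset.HasAntidiagonal.antidiagonal n).filter (fun q => q.1 ≠ 0 ∧ q.2 ≠ 0),
          PowerSeries.coeff q.1 Yk * PowerSeries.coeff q.2 U := by
    intro n hn
    have hc := congrArg (PowerSeries.coeff n) hYU
    rw [coeff_mul_split Yk U n hn, hU0, mul_one,
      ← PowerSeries.coeff_zero_eq_constantCoeff_apply, hY0, zero_mul] at hc
    linear_combination hc
  have part1 : ∀ n : ℕ, Dge 1 (PowerSeries.coeff n Yk)
      ∧ PowerSeries.coeff n Yk ∈ Asub N n := by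
    intro n
    induction n using Nat.strong_induction_on with
    | _ n ih =>
      rcases Nat.eq_zero_or_pos n with rfl | hn
      · rw [hY0]; exact ⟨Dge_zero 1, zero_mem _⟩
      rw [keyn n hn]
      have DV1 : Dge 1 (PowerSeries.coeff n V) := by
        rw [hVc n]; split_ifs
        · exact Dge_zero 1
        · exact hXX.coeffD1 n hn
      have memV : PowerSeries.coeff n V ∈ Asub N n := by
        rw [hVc n]; split_ifs
        · exact zero_mem _
        · exact hXX.coeffA n
      constructor
      · refine DV1.sub (Dge.sum _ _ fun q hq => ?_)
        rw [Finset.mem_filter, Finset.HasAntidiagonal.mem_antidiagonal] at hq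
        exact ((ih q.1 (by omega)).1).mul_right
      · refine sub_mem memV (Subalgebra.sum_mem _ fun q hq => ?_)
        rw [Finset.mem_filter, Finset.HasAntidiagonal.mem_antidiagonal] at hq
        exact mul_mem (Asub_mono (show q.1 ≤ n by omega) (ih q.1 (by omega)).2)
          (Asub_mono (show q.2 ≤ n by omega) (memU q.2))
  refine ⟨part1, fun n hpn => ?_⟩
  have hVX : PowerSeries.coeff (n : ℕ) V = PowerSeries.coeff (n : ℕ) XX := by
    rw [hVc, if_neg hpn]
  have key2 : PowerSeries.coeff (n : ℕ) Yk - Lc c n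
      = (PowerSeries.coeff (n : ℕ) XX - Lc c n)
        - ∑ q ∈ (Finset.HasAntidiagonal.antidiagonal (n : ℕ)).filter (fun q => q.1 ≠ 0 ∧ q.2 ≠ 0),
          PowerSeries.coeff q.1 Yk * PowerSeries.coeff q.2 U := by
    rw [← hVX]
    linear_combination keyn (n : ℕ) n.pos
  rw [key2]
  constructor
  · refine (hXX.diffD n).sub (Dge.sum _ _ fun q hq => ?_)
    rw [Finset.mem_filter, Finset.HasAntidiagonal.mem_antidiagonal] at hq
    have := ((part1 q.1).1).mul (DU1 q.2 (by omega))
    simpa using this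
  · refine sub_mem (hXX.diffB n) (Subalgebra.sum_mem _ fun q hq => ?_)
    rw [Finset.mem_filter, Finset.HasAntidiagonal.mem_antidiagonal] at hq
    exact mul_mem (Asub_le_Bsub (show q.1 < (n : ℕ) by omega) (part1 q.1).2)
      (Asub_le_Bsub (show q.2 < (n : ℕ) by omega) (memU q.2))


theorem sum_sum_eq_X (A B : Matrix (Fin N) (Fin N) ℤ) (h : A * B = 1) (j : Fin N) (n : ℕ+) :
    ∑ k : Fin N, ((B k j : ℚ)) • ∑ l : Fin N, ((A l k : ℚ)) • (MvPolynomial.X (l, n) : R)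
      = MvPolynomial.X (j, n) := by
  simp only [Finset.smul_sum, smul_smul]
  rw [Finset.sum_comm]
  have step : ∀ l : Fin N, ∑ k : Fin N, ((B k j : ℚ) * (A l k : ℚ)) • (MvPolynomial.X (l, n) : R)
      = (((A * B) l j : ℤ) : ℚ) • MvPolynomial.X (l, n) := by
    intro l
    rw [← Finset.sum_smul]
    congr 1
    rw [Matrix.mul_apply]
    push_cast
    exact Finset.sum_congr rfl fun k _ => mul_comm _ _
  rw [Finset.sum_congr rfl fun l _ => step l, h]
  have step2 : ∀ l : Fin N,
      (((1 : Matrix (Fin N) (Fin N) ℤ) l j : ℤ) : ℚ) • (MvPolynomial.X (l, n) : R)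
      = if l = j then MvPolynomial.X (l, n) else 0 := by
    intro l
    by_cases hl : l = j
    · subst hl; rw [if_pos rfl, Matrix.one_apply_eq]; simp
    · rw [if_neg hl, Matrix.one_apply_ne hl]; simp
  rw [Finset.sum_congr rfl fun l _ => step2 l,
    Finset.sum_ite_eq' Finset.univ j (fun l => (MvPolynomial.X (l, n) : R))]
  simp

/-- the linear family coming from the matrix `Φ` -/
noncomputable def Lfam (Φ : Matrix (Fin N) (Fin N) ℤ) : Fin N × ℕ+ → R :=
  fun v => Lc (fun j => Φ j v.1) v.2

theorem Lfam_def (Φ : Matrix (Fin N) (Fin N) ℤ) (v : Fin N × ℕ+) :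
    Lfam Φ v = ∑ j : Fin N, ((Φ j v.1 : ℚ)) • (MvPolynomial.X (j, v.2) : R) := rfl

theorem Lfam_D1 (Φ : Matrix (Fin N) (Fin N) ℤ) (v : Fin N × ℕ+) : Dge 1 (Lfam Φ v) :=
  Dge_Lc _ _

theorem Lfam_hom (Φ : Matrix (Fin N) (Fin N) ℤ) (v : Fin N × ℕ+) :
    (Lfam Φ v).IsHomogeneous 1 := by
  rw [Lfam_def]
  refine MvPolynomial.IsHomogeneous.sum _ _ _ fun j _ => ?_
  rw [MvPolynomial.smul_eq_C_mul]
  exact MvPolynomial.isHomogeneous_C_mul_X _ _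

theorem aeval_Lfam_injective (Φ Ψ : Matrix (Fin N) (Fin N) ℤ) (h1 : Ψ * Φ = 1) :
    Function.Injective (MvPolynomial.aeval (Lfam Φ) :
      MvPolynomial (Fin N × ℕ+) ℚ →ₐ[ℚ] R) := by
  have hcomp : (MvPolynomial.aeval (Lfam Ψ)).comp
      (MvPolynomial.aeval (Lfam Φ) : MvPolynomial (Fin N × ℕ+) ℚ →ₐ[ℚ] R)
      = AlgHom.id ℚ (MvPolynomial (Fin N × ℕ+) ℚ) := by
    apply MvPolynomial.algHom_ext
    intro v
    rw [AlgHom.comp_apply, MvPolynomial.aeval_X, AlgHom.id_apply, Lfam_def, map_sum]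
    simp only [map_smul, MvPolynomial.aeval_X]
    have := sum_sum_eq_X Ψ Φ h1 v.1 v.2
    rw [show (∑ j : Fin N, ((Φ j v.1 : ℚ)) • Lfam Ψ (j, v.2))
        = ∑ k : Fin N, ((Φ k v.1 : ℚ)) • ∑ l : Fin N, ((Ψ l k : ℚ)) •
          (MvPolynomial.X (l, v.2) : R) from rfl, this]
  intro a b hab
  have := congrArg (MvPolynomial.aeval (Lfam Ψ)) hab
  rwa [← AlgHom.comp_apply, ← AlgHom.comp_apply, hcomp, AlgHom.id_apply, AlgHom.id_apply] at this

theorem independent_of_good (g : Fin N × ℕ+ → R) (Φ Ψ : Matrix (Fin N) (Fin N) ℤ)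
    (hΨΦ : Ψ * Φ = 1)
    (hgD1 : ∀ v, Dge 1 (g v))
    (hdiff : ∀ v, Dge 2 (g v - Lfam Φ v)) :
    Function.Injective (MvPolynomial.aeval g : MvPolynomial (Fin N × ℕ+) ℚ →ₐ[ℚ] R) := by
  suffices h0 : ∀ P : MvPolynomial (Fin N × ℕ+) ℚ, MvPolynomial.aeval g P = 0 → P = 0 by
    intro a b hab
    have := h0 (a - b) (by rw [map_sub, hab, sub_self])
    exact sub_eq_zero.mp this
  intro P hP
  by_contra hne
  have hsupp : P.support.Nonempty := by
    rw [Finset.nonempty_iff_ne_empty]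
    intro h
    exact hne (MvPolynomial.support_eq_empty.mp h)
  set m0 : ℕ := (P.support.image Finsupp.degree).min' (hsupp.image _) with hm0
  have hm0mem : m0 ∈ P.support.image Finsupp.degree := Finset.min'_mem _ _
  obtain ⟨α0, hα0supp, hα0deg⟩ := Finset.mem_image.mp hm0mem
  have hmin : ∀ α ∈ P.support, m0 ≤ α.degree := fun α hα =>
    Finset.min'_le _ _ (Finset.mem_image_of_mem _ hα)
  have hexp : MvPolynomial.aeval g P
      = ∑ α ∈ P.support, MvPolynomial.C (MvPolynomial.coeff α P)
          * ∏ v ∈ α.support, g v ^ α v := by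
    conv_lhs => rw [P.as_sum]
    rw [map_sum]
    refine Finset.sum_congr rfl fun α hα => ?_
    rw [MvPolynomial.aeval_monomial, MvPolynomial.algebraMap_eq]
    rfl
  have hcompP : MvPolynomial.homogeneousComponent m0 (MvPolynomial.aeval g P)
      = ∑ α ∈ P.support, if α.degree = m0
          then MvPolynomial.C (MvPolynomial.coeff α P) * ∏ v ∈ α.support, Lfam Φ v ^ α v
          else 0 := by
    rw [hexp, map_sum]
    refine Finset.sum_congr rfl fun α hα => ?_
    have hsplit : (∏ v ∈ α.support, g v ^ α v)
        = (∏ v ∈ α.support, Lfam Φ v ^ α v)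
          + ((∏ v ∈ α.support, g v ^ α v) - ∏ v ∈ α.support, Lfam Φ v ^ α v) := by ring
    have hdge : Dge (α.degree + 1)
        ((∏ v ∈ α.support, g v ^ α v) - ∏ v ∈ α.support, Lfam Φ v ^ α v) :=
      Dge.prod_sub_prod _ _ _ _ (fun v _ => hgD1 v) (fun v _ => Lfam_D1 Φ v)
        (fun v _ => hdiff v)
    have hhom : (∏ v ∈ α.support, Lfam Φ v ^ α v).IsHomogeneous α.degree := by
      have := MvPolynomial.IsHomogeneous.prod α.support (fun v => Lfam Φ v ^ α v)
        (fun v => α v) (fun v _ => by simpa using (Lfam_hom Φ v).pow (α v))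
      simpa [Finsupp.degree_apply] using this
    rw [hsplit, mul_add, map_add, MvPolynomial.homogeneousComponent_C_mul,
      MvPolynomial.homogeneousComponent_C_mul,
      hdge.homogeneousComponent_eq_zero (Nat.lt_succ_of_le (hmin α hα)),
      MvPolynomial.homogeneousComponent_of_mem hhom]
    by_cases hdeg : α.degree = m0
    · rw [if_pos hdeg, if_pos hdeg.symm]; ring
    · rw [if_neg hdeg, if_neg (Ne.symm hdeg)]; ring
  set Q : MvPolynomial (Fin N × ℕ+) ℚ :=
    ∑ α ∈ P.support.filter (fun α => α.degree = m0),
      MvPolynomial.monomial α (MvPolynomial.coeff α P) with hQ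
  have hQL : MvPolynomial.aeval (Lfam Φ) Q
      = ∑ α ∈ P.support, if α.degree = m0
          then MvPolynomial.C (MvPolynomial.coeff α P) * ∏ v ∈ α.support, Lfam Φ v ^ α v
          else 0 := by
    rw [hQ, map_sum, Finset.sum_filter]
    refine Finset.sum_congr rfl fun α hα => ?_
    by_cases hdeg : α.degree = m0
    · rw [if_pos hdeg, if_pos hdeg, MvPolynomial.aeval_monomial, MvPolynomial.algebraMap_eq]
      rfl
    · rw [if_neg hdeg, if_neg hdeg]
  have hQ0 : Q = 0 := by
    apply aeval_Lfam_injective Φ Ψ hΨΦ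
    rw [hQL, ← hcompP, hP, map_zero, map_zero]
  have hcoeffQ : MvPolynomial.coeff α0 Q = MvPolynomial.coeff α0 P := by
    rw [hQ]
    rw [show MvPolynomial.coeff α0 (∑ α ∈ P.support.filter (fun α => α.degree = m0),
        MvPolynomial.monomial α (MvPolynomial.coeff α P))
      = ∑ α ∈ P.support.filter (fun α => α.degree = m0),
          if α = α0 then MvPolynomial.coeff α P else 0 from by
        rw [MvPolynomial.coeff_sum]
        exact Finset.sum_congr rfl fun α _ => MvPolynomial.coeff_monomial _ _ _]
    rw [Finset.sum_ite_eq' _ α0 (fun α => MvPolynomial.coeff α P),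
      if_pos (Finset.mem_filter.mpr ⟨hα0supp, hα0deg⟩)]
  rw [hQ0, MvPolynomial.coeff_zero] at hcoeffQ
  exact (MvPolynomial.mem_support_iff.mp hα0supp) hcoeffQ.symm

end Good



theorem adjoin_int_subset_rat {R : Type*} [CommRing R] [Algebra ℚ R] (s : Set R) :
    (Algebra.adjoin ℤ s : Set R) ⊆ (Algebra.adjoin ℚ s : Set R) := by
  intro x hx
  have h : Algebra.adjoin ℤ s ≤ (Algebra.adjoin ℚ s).restrictScalars ℤ :=
    Algebra.adjoin_le Algebra.subset_adjoin
  exact h hx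

theorem base_fact {σ : Type*} (T : Set σ) (a : MvPolynomial σ ℚ)
    (ha1 : a ∈ Algebra.adjoin ℤ (Set.range (MvPolynomial.X : σ → MvPolynomial σ ℚ)))
    (ha2 : a ∈ Algebra.adjoin ℚ (MvPolynomial.X '' T)) :
    a ∈ Algebra.adjoin ℤ (MvPolynomial.X '' T) := by
  classical
  set ι : MvPolynomial σ ℤ →ₐ[ℤ] MvPolynomial σ ℚ :=
    (MvPolynomial.map (Int.castRingHom ℚ)).toIntAlgHom with hι
  have hιX : ∀ v : σ, ι (MvPolynomial.X v) = MvPolynomial.X v := fun v =>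
    MvPolynomial.map_X _ v
  have hrange : Algebra.adjoin ℤ (Set.range (MvPolynomial.X : σ → MvPolynomial σ ℚ))
      = (⊤ : Subalgebra ℤ (MvPolynomial σ ℤ)).map ι := by
    rw [← MvPolynomial.adjoin_range_X, AlgHom.map_adjoin]
    congr 1
    rw [← Set.range_comp]
    exact (congrArg Set.range (funext fun v => hιX v)).symm
  rw [hrange] at ha1
  obtain ⟨P, -, hPa⟩ := Subalgebra.mem_map.mp ha1
  have hvars : ↑a.vars ⊆ T := by
    rw [← MvPolynomial.supported_eq_adjoin_X] at ha2
    exact MvPolynomial.mem_supported.mp ha2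
  have hPvars : ↑P.vars ⊆ T := by
    have : (MvPolynomial.map (Int.castRingHom ℚ) P).vars = P.vars :=
      MvPolynomial.vars_map_of_injective (p := P) Int.cast_injective
    rw [← this]
    rw [show MvPolynomial.map (Int.castRingHom ℚ) P = a from hPa]
    exact hvars
  have hPmem : P ∈ Algebra.adjoin ℤ (MvPolynomial.X '' T) := by
    rw [← MvPolynomial.supported_eq_adjoin_X]
    exact MvPolynomial.mem_supported.mpr hPvars
  have : a ∈ (Algebra.adjoin ℤ (MvPolynomial.X '' T)).map ι :=
    Subalgebra.mem_map.mpr ⟨P, hPmem, hPa⟩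
  rw [AlgHom.map_adjoin] at this
  rwa [show ι '' (MvPolynomial.X '' T) = MvPolynomial.X '' T by
    rw [Set.image_image]
    exact Set.image_congr fun v _ => hιX v] at this

end Stmt10Aux

open Stmt10Aux in
/-- let `A = ℚ[x_{j,i} : j ∈ {1,…,N}, i ≥ 1]` (variables indexed by
`Fin N × ℕ+`), `Φ = (φ_{j,k}) ∈ GL_N(ℤ)`, and in `A⟦t⟧` let `F_j = 1 + Σ_{i≥1} x_{j,i} tⁱ`
(a unit, since its constant term is 1).  For `1 ≤ k ≤ M` put `X_k = Π_j F_j^{φ_{j,k}}`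
(integer powers in the unit group), let `U_k`,`V_k` be its `p`-singular/`p`-regular parts
and `Y_k = V_k·U_k⁻¹ = Σ y_{k,n} tⁿ`.  Then, inside `A`,
`ℤ[x_{j,i}] ∩ ℚ[y_{k,n} : k ≤ M, p ∤ n] = ℤ[y_{k,n} : k ≤ M, p ∤ n]`. -/
theorem stmt10 (p : ℕ) (hp : p.Prime) (N M : ℕ) (hM : 1 ≤ M) (hMN : M ≤ N)
    (Φ : Matrix (Fin N) (Fin N) ℤ) (hΦ : IsUnit Φ.det)
    (F : Fin N → (PowerSeries (MvPolynomial (Fin N × ℕ+) ℚ))ˣ)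
    (hF : ∀ j : Fin N, (F j : PowerSeries (MvPolynomial (Fin N × ℕ+) ℚ)) =
      PowerSeries.mk fun i => if h : 0 < i then MvPolynomial.X (j, ⟨i, h⟩) else 1)
    (X Y : Fin N → PowerSeries (MvPolynomial (Fin N × ℕ+) ℚ))
    (hX : ∀ k : Fin N, X k =
      ((∏ j : Fin N, F j ^ (Φ j k) : (PowerSeries (MvPolynomial (Fin N × ℕ+) ℚ))ˣ) :
        PowerSeries (MvPolynomial (Fin N × ℕ+) ℚ)))
    (hY : ∀ k : Fin N, (k : ℕ) < M →
      Y k * pSingularPart p (X k) = pRegularPart p (X k)) :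
    (Algebra.adjoin ℤ
        (Set.range (MvPolynomial.X : Fin N × ℕ+ → MvPolynomial (Fin N × ℕ+) ℚ)) :
        Set (MvPolynomial (Fin N × ℕ+) ℚ)) ∩
      (Algebra.adjoin ℚ
        {a : MvPolynomial (Fin N × ℕ+) ℚ | ∃ k : Fin N, (k : ℕ) < M ∧ ∃ n : ℕ,
          1 ≤ n ∧ ¬ p ∣ n ∧ a = PowerSeries.coeff n (Y k)} :
        Set (MvPolynomial (Fin N × ℕ+) ℚ)) =
    (Algebra.adjoin ℤ
        {a : MvPolynomial (Fin N × ℕ+) ℚ | ∃ k : Fin N, (k : ℕ) < M ∧ ∃ n : ℕ,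
          1 ≤ n ∧ ¬ p ∣ n ∧ a = PowerSeries.coeff n (Y k)} :
        Set (MvPolynomial (Fin N × ℕ+) ℚ)) := by
  classical
  have hΨΦ : Φ⁻¹ * Φ = 1 := Matrix.nonsing_inv_mul Φ hΦ
  have hΦΨ : Φ * Φ⁻¹ = 1 := Matrix.mul_nonsing_inv Φ hΦ
  -- each `X k` is Good
  have goodX : ∀ k : Fin N, Good (X k) (fun j => Φ j k) := by
    intro k
    have hval : X k = ∏ j : Fin N,
        ((F j ^ (Φ j k) : (PowerSeries (MvPolynomial (Fin N × ℕ+) ℚ))ˣ) :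
          PowerSeries (MvPolynomial (Fin N × ℕ+) ℚ)) := by
      rw [hX k]; exact Units.coe_prod _ _
    have hc : (∑ j : Fin N, (Φ j k) • Pi.single j (1 : ℤ)) = (fun j => Φ j k) := by
      funext j'
      rw [Finset.sum_apply]
      simp only [Pi.smul_apply, Pi.single_apply, smul_eq_mul, mul_ite, mul_one, mul_zero]
      simp [Finset.sum_ite_eq]
    rw [hval, ← hc]
    exact good_prod Finset.univ _ _ fun j _ =>
      good_zpow (good_F j _ (hF j)) (Φ j k)
  have hYf := fun (k : Fin N) (hk : (k : ℕ) < M) => good_Y p (goodX k) (hY k hk)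
  -- the new generators
  set g : Fin N × ℕ+ → MvPolynomial (Fin N × ℕ+) ℚ := fun v =>
    if ((v.1 : ℕ) < M ∧ ¬ p ∣ (v.2 : ℕ)) then
      PowerSeries.coeff (v.2 : ℕ) (Y v.1)
    else PowerSeries.coeff (v.2 : ℕ) (X v.1) with hgdef
  have hgdiff : ∀ v : Fin N × ℕ+, Dge 2 (g v - Lfam Φ v) ∧
      (g v - Lfam Φ v) ∈ Bsub N (v.2 : ℕ) := by
    intro v
    rw [hgdef]
    dsimp only
    split_ifs with hv
    · exact (hYf v.1 hv.1).2 v.2 hv.2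
    · exact ⟨(goodX v.1).diffD v.2, (goodX v.1).diffB v.2⟩
  have hgD1 : ∀ v : Fin N × ℕ+, Dge 1 (g v) := by
    intro v
    rw [hgdef]
    dsimp only
    split_ifs with hv
    · exact ((hYf v.1 hv.1).1 (v.2 : ℕ)).1
    · exact (goodX v.1).coeffD1 _ v.2.pos
  have hgA : ∀ v : Fin N × ℕ+, g v ∈ Asub N (v.2 : ℕ) := by
    intro v
    rw [hgdef]
    dsimp only
    split_ifs with hv
    · exact ((hYf v.1 hv.1).1 (v.2 : ℕ)).2
    · exact (goodX v.1).coeffA _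
  have hinj : Function.Injective (MvPolynomial.aeval g :
      MvPolynomial (Fin N × ℕ+) ℚ →ₐ[ℚ] MvPolynomial (Fin N × ℕ+) ℚ) :=
    independent_of_good g Φ Φ⁻¹ hΨΦ hgD1 (fun v => (hgdiff v).1)
  -- all variables are integrally generated by `g`
  have hXinG : ∀ n : ℕ, ∀ j : Fin N, ∀ m : ℕ+, (m : ℕ) ≤ n →
      MvPolynomial.X (j, m) ∈ Algebra.adjoin ℤ (Set.range g) := by
    intro n
    induction n using Nat.strong_induction_on with
    | _ n ih =>
      intro j m hm
      have hn1 : 1 ≤ n := le_trans m.pos hm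
      have hB : (Bsub N (m : ℕ)) ≤ Algebra.adjoin ℤ (Set.range g) := by
        apply Algebra.adjoin_le
        rintro _ ⟨w, hw, rfl⟩
        have hw' : (w.2 : ℕ) < (m : ℕ) := hw
        exact ih (n - 1) (by omega) w.1 w.2 (by omega)
      have hLcmem : ∀ k : Fin N, Lc (fun j' => Φ j' k) m ∈ Algebra.adjoin ℤ (Set.range g) := by
        intro k
        have h1 : g (k, m) ∈ Algebra.adjoin ℤ (Set.range g) :=
          Algebra.subset_adjoin ⟨(k, m), rfl⟩
        have h2 := (hgdiff (k, m)).2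
        have h3 : Lc (fun j' => Φ j' k) m = g (k, m) - (g (k, m) - Lfam Φ (k, m)) := by
          rw [show Lfam Φ (k, m) = Lc (fun j' => Φ j' k) m from rfl]; ring
        rw [h3]
        exact sub_mem h1 (hB h2)
      have hkey := sum_sum_eq_X Φ Φ⁻¹ hΦΨ j m
      rw [← hkey]
      exact Subalgebra.sum_mem _ fun k _ => smul_mem_int (hLcmem k)
  have hG0 : Algebra.adjoin ℤ (Set.range g)
      = Algebra.adjoin ℤ (Set.range (MvPolynomial.X : Fin N × ℕ+ →
          MvPolynomial (Fin N × ℕ+) ℚ)) := by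
    apply le_antisymm
    · apply Algebra.adjoin_le
      rintro _ ⟨v, rfl⟩
      exact Asub_le_adjoin_range _ (hgA v)
    · apply Algebra.adjoin_le
      rintro _ ⟨v, rfl⟩
      have := hXinG (v.2 : ℕ) v.1 v.2 le_rfl
      rwa [Prod.mk.eta] at this
  set Tset : Set (Fin N × ℕ+) := {v | (v.1 : ℕ) < M ∧ ¬ p ∣ (v.2 : ℕ)} with hTset
  have hS : {a : MvPolynomial (Fin N × ℕ+) ℚ | ∃ k : Fin N, (k : ℕ) < M ∧ ∃ n : ℕ,
      1 ≤ n ∧ ¬ p ∣ n ∧ a = PowerSeries.coeff n (Y k)}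
      = g '' Tset := by
    ext a
    constructor
    · rintro ⟨k, hk, n, hn1, hpn, rfl⟩
      refine ⟨(k, ⟨n, hn1⟩), ⟨hk, hpn⟩, ?_⟩
      rw [hgdef]
      dsimp only
      rw [if_pos ⟨hk, hpn⟩]
      rfl
    · rintro ⟨v, hv, rfl⟩
      obtain ⟨hv1, hv2⟩ := hv
      refine ⟨v.1, hv1, (v.2 : ℕ), v.2.pos, hv2, ?_⟩
      rw [hgdef]
      dsimp only
      rw [if_pos ⟨hv1, hv2⟩]
  -- surjectivity
  have htop : Algebra.adjoin ℚ (Set.range g) = ⊤ := by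
    rw [eq_top_iff, ← MvPolynomial.adjoin_range_X]
    apply Algebra.adjoin_le
    rintro _ ⟨v, rfl⟩
    have := hXinG (v.2 : ℕ) v.1 v.2 le_rfl
    rw [Prod.mk.eta] at this
    exact adjoin_int_subset_rat _ this
  have hsurj : Function.Surjective (MvPolynomial.aeval g :
      MvPolynomial (Fin N × ℕ+) ℚ →ₐ[ℚ] MvPolynomial (Fin N × ℕ+) ℚ) := by
    intro a
    have : a ∈ (MvPolynomial.aeval g :
        MvPolynomial (Fin N × ℕ+) ℚ →ₐ[ℚ] MvPolynomial (Fin N × ℕ+) ℚ).range := by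
      rw [← Algebra.adjoin_range_eq_range_aeval, htop]
      trivial
    obtain ⟨b, hb⟩ := this
    exact ⟨b, hb⟩
  set φQ : MvPolynomial (Fin N × ℕ+) ℚ →ₐ[ℚ] MvPolynomial (Fin N × ℕ+) ℚ :=
    MvPolynomial.aeval g with hφQ
  set φZ : MvPolynomial (Fin N × ℕ+) ℚ →ₐ[ℤ] MvPolynomial (Fin N × ℕ+) ℚ :=
    (φQ : MvPolynomial (Fin N × ℕ+) ℚ →+* MvPolynomial (Fin N × ℕ+) ℚ).toIntAlgHom with hφZ
  have hφZQ : ∀ x, φZ x = φQ x := fun x => rfl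
  have himg_rangeX : ⇑φZ '' Set.range (MvPolynomial.X : Fin N × ℕ+ →
      MvPolynomial (Fin N × ℕ+) ℚ) = Set.range g := by
    rw [← Set.range_comp]
    exact congrArg Set.range (funext fun v => MvPolynomial.aeval_X g v)
  have himg_XT : ⇑φZ '' ((MvPolynomial.X : Fin N × ℕ+ →
      MvPolynomial (Fin N × ℕ+) ℚ) '' Tset) = g '' Tset := by
    rw [Set.image_image]
    exact Set.image_congr fun v _ => MvPolynomial.aeval_X g v
  ext a
  constructor
  · rintro ⟨haZ, haQ⟩
    have haZ' : a ∈ (Algebra.adjoin ℤ (Set.range (MvPolynomial.X : Fin N × ℕ+ →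
        MvPolynomial (Fin N × ℕ+) ℚ))).map φZ := by
      rw [AlgHom.map_adjoin, himg_rangeX, hG0]
      exact haZ
    obtain ⟨b, hbZ, hba⟩ := Subalgebra.mem_map.mp haZ'
    have haQ' : a ∈ (Algebra.adjoin ℚ ((MvPolynomial.X : Fin N × ℕ+ →
        MvPolynomial (Fin N × ℕ+) ℚ) '' Tset)).map φQ := by
      rw [AlgHom.map_adjoin]
      rw [show ⇑φQ '' ((MvPolynomial.X : Fin N × ℕ+ →
        MvPolynomial (Fin N × ℕ+) ℚ) '' Tset) = g '' Tset from himg_XT, ← hS]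
      exact haQ
    obtain ⟨b', hbQ, hb'a⟩ := Subalgebra.mem_map.mp haQ'
    have hbb : b' = b := hinj (by rw [hb'a, ← hφZQ b, hba])
    rw [hbb] at hbQ
    have hbT := base_fact Tset b hbZ hbQ
    have hfin : a ∈ (Algebra.adjoin ℤ ((MvPolynomial.X : Fin N × ℕ+ →
        MvPolynomial (Fin N × ℕ+) ℚ) '' Tset)).map φZ :=
      Subalgebra.mem_map.mpr ⟨b, hbT, hba⟩
    rw [AlgHom.map_adjoin, himg_XT] at hfin
    show a ∈ Algebra.adjoin ℤ {a : MvPolynomial (Fin N × ℕ+) ℚ | ∃ k : Fin N, (k : ℕ) < M ∧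
      ∃ n : ℕ, 1 ≤ n ∧ ¬ p ∣ n ∧ a = PowerSeries.coeff n (Y k)}
    rw [hS]
    exact hfin
  · intro haS
    have haS' : a ∈ Algebra.adjoin ℤ (g '' Tset) := by rwa [hS] at haS
    constructor
    · have hle : Algebra.adjoin ℤ (g '' Tset) ≤ Algebra.adjoin ℤ
          (Set.range (MvPolynomial.X : Fin N × ℕ+ → MvPolynomial (Fin N × ℕ+) ℚ)) := by
        apply Algebra.adjoin_le
        rintro _ ⟨v, -, rfl⟩
        exact Asub_le_adjoin_range _ (hgA v)
      exact hle haS'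
    · have := adjoin_int_subset_rat {a : MvPolynomial (Fin N × ℕ+) ℚ | ∃ k : Fin N,
        (k : ℕ) < M ∧ ∃ n : ℕ, 1 ≤ n ∧ ¬ p ∣ n ∧
        a = PowerSeries.coeff n (Y k)} haS
      exact this
end

section
/- Let p be a prime, let N ≥ M ≥ 1 be integers, and let Φ = (φ_{j,k}) ∈ GL_N(ℤ). Let A = ℚ[x_{j,i} : j ∈ {1,…,N}, i ≥ 1] and, in A[[t]], put F_j(t) = 1 + Σ_{i≥1} x_{j,i} t^i for each j. For each k ∈ {1,…,M} set X_k(t) = ∏_{j=1}^N F_j(t)^{φ_{j,k}}, let U_k and V_k be the p-singular and p-regular parts of X_k, and set Y_k(t) = V_k(t)·U_k(t)^{-1} = Σ_{n≥0} y_{k,n} t^n. Then the family {y_{k,n} : 1 ≤ k ≤ M, n ≥ 1, p ∤ n} is algebraically independent over ℚ. -/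
open PowerSeries

lemma prod_zpow_eq_zpow_sum {G ι : Type*} [CommGroup G] (a : G) (f : ι → ℤ) (s : Finset ι) :
    ∏ i ∈ s, a ^ f i = a ^ (∑ i ∈ s, f i) := by
  induction s using Finset.cons_induction with
  | empty => simp
  | cons i s hi ih => rw [Finset.prod_cons, Finset.sum_cons, ih, zpow_add]

lemma map_pSing {R S : Type*} [CommRing R] [CommRing S] (f : R →+* S) (p : ℕ)
    (F : PowerSeries R) :
    PowerSeries.map f (pSingularPart p F) = pSingularPart p (PowerSeries.map f F) := by
  ext n; simp [pSingularPart, coeff_map, apply_ite f]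

lemma map_pReg {R S : Type*} [CommRing R] [CommRing S] (f : R →+* S) (p : ℕ)
    (F : PowerSeries R) :
    PowerSeries.map f (pRegularPart p F) = pRegularPart p (PowerSeries.map f F) := by
  ext n; simp [pRegularPart, coeff_map, apply_ite f]

set_option maxHeartbeats 1000000 in
/-- with the setup of Statement 10 (`A = ℚ[x_{j,i}]`, `Φ ∈ GL_N(ℤ)`,
`F_j = 1 + Σ_{i≥1} x_{j,i} tⁱ`, `X_k = Π_j F_j^{φ_{j,k}}`, `Y_k = V_k·U_k⁻¹ = Σ y_{k,n} tⁿ`),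
the family `{y_{k,n} : 1 ≤ k ≤ M, n ≥ 1, p ∤ n}` is algebraically independent over `ℚ`. -/
theorem stmt11 (p : ℕ) (hp : p.Prime) (N M : ℕ) (hM : 1 ≤ M) (hMN : M ≤ N)
    (Φ : Matrix (Fin N) (Fin N) ℤ) (hΦ : IsUnit Φ.det)
    (F : Fin N → (PowerSeries (MvPolynomial (Fin N × ℕ+) ℚ))ˣ)
    (hF : ∀ j : Fin N, (F j : PowerSeries (MvPolynomial (Fin N × ℕ+) ℚ)) =
      PowerSeries.mk fun i => if h : 0 < i then MvPolynomial.X (j, ⟨i, h⟩) else 1)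
    (X Y : Fin N → PowerSeries (MvPolynomial (Fin N × ℕ+) ℚ))
    (hX : ∀ k : Fin N, X k =
      ((∏ j : Fin N, F j ^ (Φ j k) : (PowerSeries (MvPolynomial (Fin N × ℕ+) ℚ))ˣ) :
        PowerSeries (MvPolynomial (Fin N × ℕ+) ℚ)))
    (hY : ∀ k : Fin N, (k : ℕ) < M →
      Y k * pSingularPart p (X k) = pRegularPart p (X k)) :
    AlgebraicIndependent ℚ
      (fun kn : {kn : Fin N × ℕ // (kn.1 : ℕ) < M ∧ 1 ≤ kn.2 ∧ ¬ p ∣ kn.2} =>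
        PowerSeries.coeff kn.1.2 (Y kn.1.1)) := by
  classical
  -- inverse matrix
  have hΦu : IsUnit Φ := (Matrix.isUnit_iff_isUnit_det Φ).mpr hΦ
  set ψ : Matrix (Fin N) (Fin N) ℤ := ↑(hΦu.unit⁻¹) with hψdef
  have hψΦ : ψ * Φ = 1 := by
    have h := hΦu.unit.inv_mul
    rwa [hΦu.unit_spec] at h
  have hent : ∀ l k : Fin N, ∑ j, ψ l j * Φ j k = if l = k then 1 else 0 := by
    intro l k
    have := congrFun (congrFun hψΦ l) k
    simpa [Matrix.mul_apply, Matrix.one_apply] using this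
  -- the target power series
  set H : Fin N → PowerSeries (MvPolynomial (Fin N × ℕ+) ℚ) := fun k => PowerSeries.mk fun n =>
    if h : p ∣ n then (if n = 0 then (1 : (MvPolynomial (Fin N × ℕ+) ℚ)) else 0)
    else MvPolynomial.X (k, ⟨n, Nat.pos_of_ne_zero fun hn => h (hn ▸ dvd_zero p)⟩) with hHdef
  have hH : ∀ k, IsUnit (H k) := by
    intro k
    rw [PowerSeries.isUnit_iff_constantCoeff]
    simp [hHdef]
  set Hu : Fin N → (PowerSeries (MvPolynomial (Fin N × ℕ+) ℚ))ˣ := fun k => (hH k).unit with hHu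
  have hHuval : ∀ k, (Hu k : PowerSeries (MvPolynomial (Fin N × ℕ+) ℚ)) = H k := fun k => (hH k).unit_spec
  set G : Fin N → (PowerSeries (MvPolynomial (Fin N × ℕ+) ℚ))ˣ := fun j => ∏ k, Hu k ^ (ψ k j) with hGdef
  set σ : (MvPolynomial (Fin N × ℕ+) ℚ) →ₐ[ℚ] (MvPolynomial (Fin N × ℕ+) ℚ) :=
    MvPolynomial.aeval fun ji : Fin N × ℕ+ =>
      PowerSeries.coeff (ji.2 : ℕ) ((G ji.1 : PowerSeries (MvPolynomial (Fin N × ℕ+) ℚ))) with hσdef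
  -- constant coefficient of G is 1
  have hcu : ∀ j, PowerSeries.constantCoeff ((G j : PowerSeries (MvPolynomial (Fin N × ℕ+) ℚ))) = 1 := by
    intro j
    set cu : (PowerSeries (MvPolynomial (Fin N × ℕ+) ℚ))ˣ →* (MvPolynomial (Fin N × ℕ+) ℚ)ˣ :=
      Units.map (PowerSeries.constantCoeff : PowerSeries (MvPolynomial (Fin N × ℕ+) ℚ) →+* (MvPolynomial (Fin N × ℕ+) ℚ)) with hcudef
    have h1 : ∀ k, cu (Hu k) = 1 := by
      intro k
      apply Units.ext
      simp [hcudef, hHuval, hHdef, PowerSeries.constantCoeff_mk]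
    have h2 : cu (G j) = 1 := by
      simp [hGdef, map_prod, map_zpow, h1]
    have h3 := congrArg Units.val h2
    simpa [hcudef] using h3
  -- map σ sends F j to G j
  have L1 : ∀ j, PowerSeries.map (σ : (MvPolynomial (Fin N × ℕ+) ℚ) →+* (MvPolynomial (Fin N × ℕ+) ℚ)) ((F j : PowerSeries (MvPolynomial (Fin N × ℕ+) ℚ))) = (G j : PowerSeries (MvPolynomial (Fin N × ℕ+) ℚ)) := by
    intro j
    ext n
    rw [PowerSeries.coeff_map, hF j, PowerSeries.coeff_mk]
    by_cases h : 0 < n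
    · rw [dif_pos h]
      simp only [hσdef, RingHom.coe_coe, MvPolynomial.aeval_X]
      rfl
    · have hn : n = 0 := Nat.eq_zero_of_not_pos h
      subst hn
      rw [PowerSeries.coeff_zero_eq_constantCoeff, hcu j]
      simp
  -- map σ sends X k to H k
  have L2 : ∀ k, PowerSeries.map (σ : (MvPolynomial (Fin N × ℕ+) ℚ) →+* (MvPolynomial (Fin N × ℕ+) ℚ)) (X k) = H k := by
    intro k
    set mσ : (PowerSeries (MvPolynomial (Fin N × ℕ+) ℚ))ˣ →* (PowerSeries (MvPolynomial (Fin N × ℕ+) ℚ))ˣ :=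
      Units.map (PowerSeries.map (σ : (MvPolynomial (Fin N × ℕ+) ℚ) →+* (MvPolynomial (Fin N × ℕ+) ℚ))) with hmσ
    have hmF : ∀ j, mσ (F j) = G j := by
      intro j; apply Units.ext; simpa [hmσ] using L1 j
    have step : mσ (∏ j, F j ^ Φ j k) = Hu k := by
      rw [map_prod]
      simp_rw [map_zpow, hmF]
      calc ∏ j, G j ^ Φ j k
          = ∏ j, ∏ l, Hu l ^ (ψ l j * Φ j k) := by
            refine Finset.prod_congr rfl fun j _ => ?_
            rw [hGdef]
            rw [← Finset.prod_zpow]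
            exact Finset.prod_congr rfl fun l _ => (zpow_mul _ _ _).symm
        _ = ∏ l, ∏ j, Hu l ^ (ψ l j * Φ j k) := Finset.prod_comm
        _ = ∏ l, Hu l ^ (∑ j, ψ l j * Φ j k) := by
            exact Finset.prod_congr rfl fun l _ => prod_zpow_eq_zpow_sum _ _ _
        _ = ∏ l, Hu l ^ (if l = k then (1 : ℤ) else 0) := by
            simp_rw [hent]
        _ = Hu k := by
            simp [apply_ite (fun m : ℤ => Hu _ ^ m)]
    rw [hX k]
    have : PowerSeries.map (σ : (MvPolynomial (Fin N × ℕ+) ℚ) →+* (MvPolynomial (Fin N × ℕ+) ℚ)) ((∏ j, F j ^ Φ j k : (PowerSeries (MvPolynomial (Fin N × ℕ+) ℚ))ˣ) : PowerSeries (MvPolynomial (Fin N × ℕ+) ℚ))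
        = ((mσ (∏ j, F j ^ Φ j k) : (PowerSeries (MvPolynomial (Fin N × ℕ+) ℚ))ˣ) : PowerSeries (MvPolynomial (Fin N × ℕ+) ℚ)) := by
      rfl
    rw [this, step, hHuval]
  -- singular and regular parts of H
  have L3 : ∀ k, pSingularPart p (H k) = 1 := by
    intro k
    ext n
    simp only [pSingularPart, PowerSeries.coeff_mk, hHdef, PowerSeries.coeff_one]
    by_cases h : p ∣ n
    · by_cases h0 : n = 0 <;> simp [h, h0]
    · have h0 : n ≠ 0 := fun hn => h (hn ▸ dvd_zero p)
      simp [h, h0]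
  have L4 : ∀ k, pRegularPart p (H k) = H k - 1 := by
    intro k
    ext n
    simp only [pRegularPart, PowerSeries.coeff_mk, hHdef, map_sub, PowerSeries.coeff_one]
    by_cases h : p ∣ n
    · by_cases h0 : n = 0 <;> simp [h, h0]
    · have h0 : n ≠ 0 := fun hn => h (hn ▸ dvd_zero p)
      simp [h, h0]
  -- image of Y under σ
  have L5 : ∀ k : Fin N, (k : ℕ) < M → PowerSeries.map (σ : (MvPolynomial (Fin N × ℕ+) ℚ) →+* (MvPolynomial (Fin N × ℕ+) ℚ)) (Y k) = H k - 1 := by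
    intro k hk
    have h := congrArg (PowerSeries.map (σ : (MvPolynomial (Fin N × ℕ+) ℚ) →+* (MvPolynomial (Fin N × ℕ+) ℚ))) (hY k hk)
    rw [map_mul, map_pSing, map_pReg, L2 k, L3 k, L4 k, mul_one] at h
    exact h
  -- conclude
  apply AlgebraicIndependent.of_comp σ
  have key : (⇑σ ∘ fun kn : {kn : Fin N × ℕ // (kn.1 : ℕ) < M ∧ 1 ≤ kn.2 ∧ ¬ p ∣ kn.2} =>
      PowerSeries.coeff kn.1.2 (Y kn.1.1))
      = fun kn => MvPolynomial.X (kn.1.1, ⟨kn.1.2, kn.2.2.1⟩) := by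
    funext kn
    obtain ⟨⟨k, n⟩, hk, hn1, hnp⟩ := kn
    have hc : σ (PowerSeries.coeff n (Y k))
        = PowerSeries.coeff n (PowerSeries.map (σ : (MvPolynomial (Fin N × ℕ+) ℚ) →+* (MvPolynomial (Fin N × ℕ+) ℚ)) (Y k)) :=
      (PowerSeries.coeff_map _ _ _).symm
    simp only [Function.comp_apply]
    rw [hc, L5 k hk, map_sub, PowerSeries.coeff_one]
    have h0 : n ≠ 0 := by omega
    simp [hHdef, hnp, h0]
  rw [key]
  have hinj : Function.Injective
      (fun kn : {kn : Fin N × ℕ // (kn.1 : ℕ) < M ∧ 1 ≤ kn.2 ∧ ¬ p ∣ kn.2} =>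
        ((kn.1.1, ⟨kn.1.2, kn.2.2.1⟩) : Fin N × ℕ+)) := by
    rintro ⟨⟨k, n⟩, hkn⟩ ⟨⟨k', n'⟩, hkn'⟩ hab
    have h1 : k = k' := congrArg Prod.fst hab
    have h2 : n = n' := congrArg (fun x : Fin N × ℕ+ => (x.2 : ℕ)) hab
    exact Subtype.ext (Prod.ext h1 h2)
  have base := (MvPolynomial.algebraicIndependent_X (Fin N × ℕ+) ℚ).comp _ hinj
  exact base
end

section
/- Let σ be a finite type, and in MvPolynomial σ ℚ let h_n denote the complete homogeneous symmetric polynomial of degree n, i.e. the sum of all monomials of total degree n: h_n = Σ_{i_1 ≤ … ≤ i_n} X_{i_1}···X_{i_n} (for a chosen linear order on σ; equivalently the sum of X^d over all functions d : σ → ℕ with total degree n), and let p_i = Σ_{j∈σ} X_j^i be the i-th power sum. Then for every n ≥ 0, h_n = Σ_{λ ⊢ n} ∏_{i≥1} p_i^{m_i(λ)} / (m_i(λ)!·i^{m_i(λ)}), where the sum runs over all partitions λ of n and m_i(λ) denotes the number of parts of λ equal to i. -/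
open Finset MvPolynomial

namespace Stmt13

variable (σ : Type*) [Fintype σ] [DecidableEq σ]

noncomputable def H (n : ℕ) : MvPolynomial σ ℚ :=
  ∑ d ∈ (Finset.univ : Finset σ).finsuppAntidiag n, MvPolynomial.monomial d (1 : ℚ)

noncomputable def w (s : Multiset ℕ) (F : Finset ℕ) : MvPolynomial σ ℚ :=
  ∏ i ∈ F, ((((Multiset.count i s).factorial * i ^ (Multiset.count i s) : ℕ) : ℚ)⁻¹) •
    MvPolynomial.psum σ ℚ i ^ (Multiset.count i s)

lemma w_eq (s : Multiset ℕ) (F : Finset ℕ) (hF : s.toFinset ⊆ F) :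
    w σ s F = w σ s s.toFinset := by
  unfold w
  rw [← Finset.prod_subset hF]
  intro x _ hx
  rw [Multiset.count_eq_zero_of_notMem (by simpa using hx)]
  simp

noncomputable def R (n : ℕ) : MvPolynomial σ ℚ :=
  ∑ lam : Nat.Partition n, w σ lam.parts lam.parts.toFinset

set_option maxHeartbeats 1000000 in
lemma H_rec (n : ℕ) :
    (n : ℚ) • H σ n = ∑ i ∈ Finset.Icc 1 n, MvPolynomial.psum σ ℚ i * H σ (n - i) := by
  classical
  -- RHS as a sigma sum
  have rhs_eq : ∑ i ∈ Finset.Icc 1 n, MvPolynomial.psum σ ℚ i * H σ (n - i)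
      = ∑ x ∈ ((Finset.Icc 1 n) ×ˢ (Finset.univ : Finset σ)).sigma
          (fun p => (Finset.univ : Finset σ).finsuppAntidiag (n - p.1)),
          MvPolynomial.monomial (Finsupp.single x.1.2 x.1.1 + x.2) (1 : ℚ) := by
    rw [Finset.sum_sigma]
    rw [Finset.sum_product]
    refine Finset.sum_congr rfl fun i _ => ?_
    rw [MvPolynomial.psum, Finset.sum_mul]
    refine Finset.sum_congr rfl fun j _ => ?_
    rw [H, Finset.mul_sum]
    refine Finset.sum_congr rfl fun e _ => ?_
    rw [MvPolynomial.X_pow_eq_monomial, MvPolynomial.monomial_mul, one_mul]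
  -- LHS as a sigma sum
  have lhs_eq : (n : ℚ) • H σ n
      = ∑ x ∈ ((Finset.univ : Finset σ).finsuppAntidiag n ×ˢ (Finset.univ : Finset σ)).sigma
          (fun p => Finset.Icc 1 (p.1 p.2)),
          MvPolynomial.monomial x.1.1 (1 : ℚ) := by
    rw [Finset.sum_sigma, Finset.sum_product, H, Finset.smul_sum]
    refine Finset.sum_congr rfl fun d hd => ?_
    have hsum : ∑ j : σ, d j = n := (Finset.mem_finsuppAntidiag.mp hd).1
    calc (n:ℚ) • MvPolynomial.monomial d (1:ℚ)
        = ∑ j : σ, (d j : ℚ) • MvPolynomial.monomial d (1:ℚ) := by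
          rw [← Finset.sum_smul]
          congr 1
          rw [← Nat.cast_sum, hsum]
      _ = ∑ j : σ, ∑ _i ∈ Finset.Icc 1 (d j), MvPolynomial.monomial d (1:ℚ) := by
          refine Finset.sum_congr rfl fun j _ => ?_
          rw [Finset.sum_const, Nat.card_Icc]
          simp [← Nat.cast_smul_eq_nsmul ℚ]
  rw [lhs_eq, rhs_eq]
  refine (Finset.sum_nbij'
    (i := fun (x : Σ _p : (σ →₀ ℕ) × σ, ℕ) => (⟨(x.2, x.1.2), x.1.1 - Finsupp.single x.1.2 x.2⟩ :
       Σ _p : ℕ × σ, (σ →₀ ℕ)))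
    (j := fun (x : Σ _p : ℕ × σ, (σ →₀ ℕ)) => (⟨(Finsupp.single x.1.2 x.1.1 + x.2, x.1.2), x.1.1⟩ :
       Σ _p : (σ →₀ ℕ) × σ, ℕ))
    ?_ ?_ ?_ ?_ ?_)
  · -- membership forward
    rintro ⟨⟨d, j⟩, i⟩ hx
    simp only [Finset.mem_sigma, Finset.mem_product, Finset.mem_finsuppAntidiag,
      Finset.mem_Icc, Finset.mem_univ, and_true, true_and] at hx ⊢
    obtain ⟨⟨hdsum, -⟩, h1i, hidj⟩ := hx
    have hin : i ≤ n := le_trans hidj (hdsum ▸ Finset.single_le_sum (f := fun k => d k)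
      (fun _ _ => Nat.zero_le _) (Finset.mem_univ j))
    have hle : Finsupp.single j i ≤ d := by
      rw [Finsupp.single_le_iff]; exact hidj
    have hcancel : Finsupp.single j i + (d - Finsupp.single j i) = d :=
      add_tsub_cancel_of_le hle
    refine ⟨⟨h1i, hin⟩, ?_, fun k _ => Finset.mem_univ k⟩
    have : ∑ k : σ, (Finsupp.single j i + (d - Finsupp.single j i)) k = n := by
      rw [hcancel]; exact hdsum
    have hsplit : i + Finset.univ.sum ⇑(d - Finsupp.single j i) = n := by
      rw [← this]
      rw [Finset.sum_congr rfl (fun k _ => Finsupp.add_apply _ _ k), Finset.sum_add_distrib]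
      congr 1
      simp [Finsupp.single_apply, Finset.sum_ite_eq']
    omega
  · -- membership backward
    rintro ⟨⟨i, j⟩, e⟩ hx
    simp only [Finset.mem_sigma, Finset.mem_product, Finset.mem_finsuppAntidiag,
      Finset.mem_Icc, Finset.mem_univ, and_true, true_and] at hx ⊢
    obtain ⟨⟨h1i, hin⟩, hesum, -⟩ := hx
    have hsum : ∑ k : σ, (Finsupp.single j i + e) k = n := by
      rw [Finset.sum_congr rfl (fun k _ => Finsupp.add_apply _ _ k), Finset.sum_add_distrib,
        hesum]
      have : ∑ k : σ, Finsupp.single j i k = i := by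
        simp [Finsupp.single_apply, Finset.sum_ite_eq']
      omega
    refine ⟨⟨hsum, fun k _ => Finset.mem_univ k⟩, h1i, ?_⟩
    have h1 : (Finsupp.single j i + e) j = i + e j := by
      simp [Finsupp.add_apply]
    omega
  · -- left inverse
    rintro ⟨⟨d, j⟩, i⟩ hx
    simp only [Finset.mem_sigma, Finset.mem_product, Finset.mem_finsuppAntidiag,
      Finset.mem_Icc, Finset.mem_univ, and_true, true_and] at hx
    obtain ⟨-, -, hidj⟩ := hx
    have hle : Finsupp.single j i ≤ d := by
      rw [Finsupp.single_le_iff]; exact hidj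
    have hd2 : Finsupp.single j i + (d - Finsupp.single j i) = d := add_tsub_cancel_of_le hle
    simp only [hd2]
  · -- right inverse
    rintro ⟨⟨i, j⟩, e⟩ hx
    simp only [add_tsub_cancel_left]
  · -- values
    rintro ⟨⟨d, j⟩, i⟩ hx
    simp only [Finset.mem_sigma, Finset.mem_product, Finset.mem_finsuppAntidiag,
      Finset.mem_Icc, Finset.mem_univ, and_true, true_and] at hx
    obtain ⟨-, -, hidj⟩ := hx
    have hle : Finsupp.single j i ≤ d := by
      rw [Finsupp.single_le_iff]; exact hidj
    simp only
    rw [add_tsub_cancel_of_le hle]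


lemma key (s : Multiset ℕ) (i : ℕ) (his : i ∈ s) (hipos : 0 < i) (F : Finset ℕ)
    (hF : s.toFinset ⊆ F) :
    MvPolynomial.psum σ ℚ i * w σ (s.erase i) F
      = ((i * Multiset.count i s : ℕ) : ℚ) • w σ s F := by
  classical
  set m := Multiset.count i s with hm
  have hm1 : 1 ≤ m := Multiset.one_le_count_iff_mem.mpr his
  have hiF : i ∈ F := hF (Multiset.mem_toFinset.mpr his)
  unfold w
  rw [← Finset.mul_prod_erase F _ hiF, ← Finset.mul_prod_erase F _ hiF]
  have htail : ∏ a ∈ F.erase i,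
      ((((Multiset.count a (s.erase i)).factorial * a ^ (Multiset.count a (s.erase i)) : ℕ) : ℚ)⁻¹) •
        MvPolynomial.psum σ ℚ a ^ (Multiset.count a (s.erase i))
      = ∏ a ∈ F.erase i,
      ((((Multiset.count a s).factorial * a ^ (Multiset.count a s) : ℕ) : ℚ)⁻¹) •
        MvPolynomial.psum σ ℚ a ^ (Multiset.count a s) := by
    refine Finset.prod_congr rfl fun a ha => ?_
    rw [Multiset.count_erase_of_ne (Finset.ne_of_mem_erase ha)]
  rw [htail, ← mul_assoc, ← smul_mul_assoc]
  congr 1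
  have hce : Multiset.count i (s.erase i) = m - 1 := by
    rw [Multiset.count_erase_self, hm]
  rw [hce]
  have hfac : ∀ k : ℕ, 1 ≤ k → k.factorial * i ^ k = (i * k) * ((k - 1).factorial * i ^ (k - 1)) := by
    intro k hk
    obtain ⟨k', rfl⟩ : ∃ k', k = k' + 1 := ⟨k - 1, (Nat.succ_pred_eq_of_pos hk).symm⟩
    rw [Nat.factorial_succ, Nat.add_sub_cancel, pow_succ]
    ring
  have hne : ((i * m : ℕ) : ℚ) ≠ 0 := by
    have : 0 < i * m := Nat.mul_pos hipos hm1
    exact_mod_cast this.ne'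
  rw [hfac m hm1]
  rw [mul_smul_comm, ← pow_succ', Nat.sub_add_cancel hm1]
  rw [smul_smul]
  congr 1
  have hi0 : (i : ℚ) ≠ 0 := by exact_mod_cast hipos.ne'
  have hm0 : (m : ℚ) ≠ 0 := by exact_mod_cast hm1.trans_lt' Nat.zero_lt_one |>.ne'
  push_cast [mul_inv]
  field_simp


lemma R_rec (n : ℕ) :
    (n : ℚ) • R σ n = ∑ i ∈ Finset.Icc 1 n, MvPolynomial.psum σ ℚ i * R σ (n - i) := by
  classical
  have step1 : (n : ℚ) • R σ n
      = ∑ lam : Nat.Partition n, ∑ i ∈ lam.parts.toFinset,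
          MvPolynomial.psum σ ℚ i * w σ (lam.parts.erase i) lam.parts.toFinset := by
    rw [R, Finset.smul_sum]
    refine Finset.sum_congr rfl fun lam _ => ?_
    have hn : ∑ i ∈ lam.parts.toFinset, i * Multiset.count i lam.parts = n := by
      have h1 := Finset.sum_multiset_map_count lam.parts (id : ℕ → ℕ)
      rw [Multiset.map_id] at h1
      have h2 : ∑ i ∈ lam.parts.toFinset, i * Multiset.count i lam.parts = lam.parts.sum := by
        rw [h1]
        refine Finset.sum_congr rfl fun i _ => ?_
        simp [mul_comm]
      exact h2.trans lam.parts_sum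
    calc (n:ℚ) • w σ lam.parts lam.parts.toFinset
        = ((∑ i ∈ lam.parts.toFinset, i * Multiset.count i lam.parts : ℕ) : ℚ) •
            w σ lam.parts lam.parts.toFinset := by rw [hn]
      _ = ∑ i ∈ lam.parts.toFinset, ((i * Multiset.count i lam.parts : ℕ) : ℚ) •
            w σ lam.parts lam.parts.toFinset := by
          rw [Nat.cast_sum, Finset.sum_smul]
      _ = _ := by
          refine Finset.sum_congr rfl fun i hi => ?_
          have his : i ∈ lam.parts := Multiset.mem_toFinset.mp hi
          exact (key σ lam.parts i his (lam.parts_pos his) _ subset_rfl).symm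
  rw [step1]
  have step2 : ∀ i ∈ Finset.Icc 1 n, MvPolynomial.psum σ ℚ i * R σ (n - i)
      = ∑ lam : Nat.Partition (n - i), MvPolynomial.psum σ ℚ i * w σ lam.parts lam.parts.toFinset := by
    intro i _
    rw [R, Finset.mul_sum]
  rw [Finset.sum_congr rfl step2]
  rw [Finset.sum_sigma', Finset.sum_sigma']
  refine Finset.sum_bij'
    (i := fun (a : Σ _lam : Nat.Partition n, ℕ) (ha : a ∈ (Finset.univ (α := Nat.Partition n)).sigma
        (fun lam => lam.parts.toFinset)) =>
      (⟨a.2, ⟨a.1.parts.erase a.2,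
        fun {x} hx => a.1.parts_pos (Multiset.mem_of_mem_erase hx), by
          have hmem : a.2 ∈ a.1.parts := by
            have := (Finset.mem_sigma.mp ha).2
            exact Multiset.mem_toFinset.mp this
          have h1 : a.2 ::ₘ a.1.parts.erase a.2 = a.1.parts := Multiset.cons_erase hmem
          have h2 : a.2 + (a.1.parts.erase a.2).sum = a.1.parts.sum := by
            rw [← Multiset.sum_cons, h1]
          have h3 := a.1.parts_sum
          omega⟩⟩ : Σ i : ℕ, Nat.Partition (n - i)))
    (j := fun (b : Σ i : ℕ, Nat.Partition (n - i)) (hb : b ∈ (Finset.Icc 1 n).sigma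
        (fun i => Finset.univ (α := Nat.Partition (n - i)))) =>
      (⟨⟨b.1 ::ₘ b.2.parts,
        fun {x} hx => by
          rcases Multiset.mem_cons.mp hx with h | h
          · subst h; exact (Finset.mem_Icc.mp (Finset.mem_sigma.mp hb).1).1
          · exact b.2.parts_pos h, by
          rw [Multiset.sum_cons, b.2.parts_sum]
          have := (Finset.mem_Icc.mp (Finset.mem_sigma.mp hb).1).2
          omega⟩, b.1⟩ : Σ _lam : Nat.Partition n, ℕ))
    ?_ ?_ ?_ ?_ ?_
  · rintro ⟨lam, i⟩ ha
    have hmem : i ∈ lam.parts := Multiset.mem_toFinset.mp (Finset.mem_sigma.mp ha).2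
    simp only [Finset.mem_sigma, Finset.mem_Icc, Finset.mem_univ, and_true]
    refine ⟨lam.parts_pos hmem, ?_⟩
    rw [← lam.parts_sum]
    exact Multiset.single_le_sum (fun x _ => Nat.zero_le x) _ hmem
  · rintro ⟨i, mu⟩ hb
    simp only [Finset.mem_sigma, Finset.mem_univ, true_and]
    exact Multiset.mem_toFinset.mpr (Multiset.mem_cons_self _ _)
  · rintro ⟨lam, i⟩ ha
    have hmem : i ∈ lam.parts := Multiset.mem_toFinset.mp (Finset.mem_sigma.mp ha).2
    refine Sigma.ext ?_ (heq_of_eq rfl)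
    exact Nat.Partition.ext (Multiset.cons_erase hmem)
  · rintro ⟨i, mu⟩ hb
    refine Sigma.ext rfl (heq_of_eq ?_)
    exact Nat.Partition.ext (Multiset.erase_cons_head _ _)
  · rintro ⟨lam, i⟩ ha
    have hmem : i ∈ lam.parts := Multiset.mem_toFinset.mp (Finset.mem_sigma.mp ha).2
    simp only
    congr 1
    rw [w_eq]
    exact Multiset.toFinset_subset.mpr (Multiset.subset_of_le (Multiset.erase_le i _))


lemma H_zero : H σ 0 = 1 := by
  classical
  have h0 : (Finset.univ : Finset σ).finsuppAntidiag 0 = {0} := by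
    ext f
    simp only [Finset.mem_finsuppAntidiag, Finset.mem_singleton]
    constructor
    · rintro ⟨hsum, -⟩
      ext x
      have := (Finset.sum_eq_zero_iff).mp hsum x (Finset.mem_univ x)
      simpa using this
    · rintro rfl
      simp
  rw [H, h0, Finset.sum_singleton]
  simp

lemma R_zero : R σ 0 = 1 := by
  classical
  rw [R]
  rw [Finset.sum_eq_single_of_mem (default : Nat.Partition 0) (Finset.mem_univ _)
    (fun b _ hb => absurd (Subsingleton.elim b default) hb)]
  simp [w]

set_option synthInstance.maxHeartbeats 1000000 in
lemma main (n : ℕ) : H σ n = R σ n := by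
  induction n using Nat.strong_induction_on with
  | _ n ih =>
    match n with
    | 0 => rw [H_zero, R_zero]
    | (n+1) =>
      have h1 := H_rec σ (n+1)
      have h2 := R_rec σ (n+1)
      have h3 : ∑ i ∈ Finset.Icc 1 (n+1), MvPolynomial.psum σ ℚ i * H σ (n+1 - i)
          = ∑ i ∈ Finset.Icc 1 (n+1), MvPolynomial.psum σ ℚ i * R σ (n+1 - i) := by
        refine Finset.sum_congr rfl fun i hi => ?_
        have h1i := (Finset.mem_Icc.mp hi).1
        rw [ih (n+1-i) (by omega)]
      have h4 : ((n+1 : ℕ) : ℚ) • H σ (n+1) = ((n+1 : ℕ) : ℚ) • R σ (n+1) := by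
        rw [h1, h3, ← h2]
      have h5 : ((n+1 : ℕ) : ℚ) ≠ 0 := by exact_mod_cast (Nat.succ_ne_zero n)
      exact smul_right_injective (MvPolynomial σ ℚ) h5 h4

end Stmt13

/-- for a finite type `σ`, let `hₙ ∈ MvPolynomial σ ℚ` be the complete
homogeneous symmetric polynomial of degree `n` (the sum of the monomials `X^d` over all
exponent functions `d : σ →₀ ℕ` of total degree `n`) and `pᵢ = Σ_j X_jⁱ` the `i`-th power
sum.  Then `hₙ = Σ_{λ ⊢ n} Π_{i≥1} pᵢ^{mᵢ(λ)} / (mᵢ(λ)! · i^{mᵢ(λ)})`, the sum running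
over partitions `λ` of `n`, where `mᵢ(λ)` is the number of parts of `λ` equal to `i`
(parts of a partition of `n` lie in `[1,n]`, so the product over `i ∈ [1,n]` suffices). -/
theorem stmt13 (σ : Type*) [Fintype σ] [DecidableEq σ] (n : ℕ)
    (h : MvPolynomial σ ℚ)
    (hh : h = ∑ d ∈ (Finset.univ : Finset σ).finsuppAntidiag n,
      MvPolynomial.monomial d (1 : ℚ)) :
    h = ∑ lam : Nat.Partition n, ∏ i ∈ Finset.Icc 1 n,
      ((((Multiset.count i lam.parts).factorial *
          i ^ (Multiset.count i lam.parts) : ℕ) : ℚ)⁻¹) •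
        MvPolynomial.psum σ ℚ i ^ (Multiset.count i lam.parts) := by
  classical
  have := Stmt13.main σ n
  rw [Stmt13.H, Stmt13.R] at this
  rw [hh, this]
  refine Finset.sum_congr rfl fun lam _ => ?_
  have hsub : lam.parts.toFinset ⊆ Finset.Icc 1 n := by
    intro i hi
    have his : i ∈ lam.parts := Multiset.mem_toFinset.mp hi
    refine Finset.mem_Icc.mpr ⟨lam.parts_pos his, ?_⟩
    rw [← lam.parts_sum]
    exact Multiset.single_le_sum (fun x _ => Nat.zero_le x) _ his
  rw [← Stmt13.w_eq σ lam.parts (Finset.Icc 1 n) hsub]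
  rfl
end
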